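/- arXiv:math/9801019 — 6 statements merged into one kernel-verified Lean document; each statement's English description precedes it below -/
import Mathlib

section
/- Let x, y, z ∈ PSL(2,ℂ) be elements of infinite order such that x commutes with y and y commutes with z. Then x commutes with z. -/
/-- `SL(2,ℂ)`: 2×2 complex matrices of determinant 1. -/
abbrev SL2C := Matrix.SpecialLinearGroup (Fin 2) ℂ

/-- `PSL(2,ℂ)`: the quotient of `SL(2,ℂ)` by its center `{I, -I}`. -/
abbrev PSL2C := SL2C ⧸ Subgroup.center SL2C


/-- key algebraic lemma for centralizer of a nonscalar 2x2 matrix being abelian -/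
lemma key_entries (a b c d p q r s p' q' r' s' : ℂ)
    (hns : b ≠ 0 ∨ c ≠ 0 ∨ a ≠ d)
    (E1 : p*a + q*c = a*p + b*r) (E2 : p*b + q*d = a*q + b*s)
    (E3 : r*a + s*c = c*p + d*r)
    (F1 : p'*a + q'*c = a*p' + b*r') (F2 : p'*b + q'*d = a*q' + b*s')
    (F3 : r'*a + s'*c = c*p' + d*r') :
    (p*p' + q*r' = p'*p + q'*r) ∧ (p*q' + q*s' = p'*q + q'*s) ∧
    (r*p' + s*r' = r'*p + s'*r) ∧ (r*q' + s*s' = r'*q + s'*s) := by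
  rcases ne_or_eq b 0 with hb | hb
  · refine ⟨mul_left_cancel₀ hb ?_, mul_left_cancel₀ hb ?_,
      mul_left_cancel₀ (mul_ne_zero hb hb) ?_, mul_left_cancel₀ hb ?_⟩
    · linear_combination q' * E1 - q * F1
    · linear_combination q' * E2 - q * F2
    · linear_combination b*r*F2 - b*r'*E2 + (a-d)*q*F1 - (a-d)*q'*E1
    · linear_combination q*F1 - q'*E1
  rcases ne_or_eq c 0 with hc | hc
  · refine ⟨mul_left_cancel₀ hc ?_, mul_left_cancel₀ (mul_ne_zero hc hc) ?_,
      mul_left_cancel₀ hc ?_, mul_left_cancel₀ hc ?_⟩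
    · linear_combination r' * E1 - r * F1
    · linear_combination (a-d)*r*F1 - (a-d)*r'*E1 + c*q*F3 - c*q'*E3
    · linear_combination r' * E3 - r * F3
    · linear_combination r * F1 - r' * F1 + r*F1 - r'*E1 - (r*F1 - r'*F1)
  · have had : a ≠ d := by
      rcases hns with h | h | h
      · exact absurd hb h
      · exact absurd hc h
      · exact h
    subst hb; subst hc
    have hsub : a - d ≠ 0 := sub_ne_zero.mpr had
    have hq : q = 0 := by
      have : q * (a - d) = 0 := by linear_combination -E2
      exact (mul_eq_zero.mp this).resolve_right hsub
    have hr : r = 0 := by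
      have : r * (a - d) = 0 := by linear_combination E3
      exact (mul_eq_zero.mp this).resolve_right hsub
    have hq' : q' = 0 := by
      have : q' * (a - d) = 0 := by linear_combination -F2
      exact (mul_eq_zero.mp this).resolve_right hsub
    have hr' : r' = 0 := by
      have : r' * (a - d) = 0 := by linear_combination F3
      exact (mul_eq_zero.mp this).resolve_right hsub
    subst hq; subst hr; subst hq'; subst hr'
    refine ⟨by ring, by ring, by ring, by ring⟩

lemma sq_central_finOrder (Y : SL2C) (h : Y ^ 2 ∈ Subgroup.center SL2C) :
    IsOfFinOrder (QuotientGroup.mk Y : PSL2C) := by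
  refine isOfFinOrder_iff_pow_eq_one.mpr ⟨2, two_pos, ?_⟩
  rw [← QuotientGroup.mk_pow]
  exact (QuotientGroup.eq_one_iff _).mpr h

/-- If lifts commute only up to sign `-1`, the middle element squares to a central
element. -/
lemma exact_commute (X Y : SL2C)
    (hy : ¬ IsOfFinOrder (QuotientGroup.mk Y : PSL2C))
    (h : Commute (QuotientGroup.mk X : PSL2C) (QuotientGroup.mk Y)) :
    X * Y = Y * X := by
  have h' : (QuotientGroup.mk (X * Y) : PSL2C) = QuotientGroup.mk (Y * X) := by
    simpa using h.eq
  have hmem : (X * Y)⁻¹ * (Y * X) ∈ Subgroup.center SL2C := QuotientGroup.eq.mp h'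
  obtain ⟨ω, hω, hsc⟩ := Matrix.SpecialLinearGroup.mem_center_iff.mp hmem
  simp only [Fintype.card_fin] at hω
  set M : Matrix (Fin 2) (Fin 2) ℂ := (X : Matrix (Fin 2) (Fin 2) ℂ) with hM
  set N : Matrix (Fin 2) (Fin 2) ℂ := (Y : Matrix (Fin 2) (Fin 2) ℂ) with hN
  have hgrp : Y * X = (X * Y) * ((X * Y)⁻¹ * (Y * X)) := by group
  have hval : N * M = (M * N) * Matrix.scalar (Fin 2) ω := by
    calc N * M = ((Y * X : SL2C) : Matrix (Fin 2) (Fin 2) ℂ) := rfl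
    _ = ((X * Y) * ((X * Y)⁻¹ * (Y * X)) : SL2C) := by rw [← hgrp]
    _ = (M * N) * Matrix.scalar (Fin 2) ω := by
        rw [Matrix.SpecialLinearGroup.coe_mul, hsc]; rfl
  have hcases : ω = 1 ∨ ω = -1 := by
    have : (ω - 1) * (ω + 1) = 0 := by linear_combination hω
    rcases mul_eq_zero.mp this with h0 | h0
    · exact Or.inl (sub_eq_zero.mp h0)
    · exact Or.inr (by linear_combination h0)
  rcases hcases with h1 | h1
  · have hsc1 : Matrix.scalar (Fin 2) (1 : ℂ) = (1 : Matrix (Fin 2) (Fin 2) ℂ) := by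
      simp
    rw [h1, hsc1, Matrix.mul_one] at hval
    refine Subtype.ext ?_
    rw [Matrix.SpecialLinearGroup.coe_mul, Matrix.SpecialLinearGroup.coe_mul]
    exact hval.symm
  · exfalso
    have hanti : N * M = -(M * N) := by
      rw [hval, h1]
      ext i j
      simp [Matrix.scalar_apply, Matrix.mul_apply, Fin.sum_univ_two,
        Matrix.diagonal, Matrix.one_apply]
    -- trace of N is zero
    have hdetM : M.det = 1 := X.2
    have hMu : IsUnit M.det := by rw [hdetM]; exact isUnit_one
    have hMMinv : M * M⁻¹ = 1 := Matrix.mul_nonsing_inv M hMu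
    have hMinvM : M⁻¹ * M = 1 := Matrix.nonsing_inv_mul M hMu
    have htr : Matrix.trace N = - Matrix.trace N := by
      calc Matrix.trace N = Matrix.trace (N * M * M⁻¹) := by
            rw [Matrix.mul_assoc, hMMinv, Matrix.mul_one]
      _ = Matrix.trace (-(M * N) * M⁻¹) := by rw [hanti]
      _ = - Matrix.trace ((M * N) * M⁻¹) := by rw [Matrix.neg_mul, Matrix.trace_neg]
      _ = - Matrix.trace (M⁻¹ * (M * N)) := by rw [Matrix.trace_mul_comm]
      _ = - Matrix.trace N := by rw [← Matrix.mul_assoc, hMinvM, Matrix.one_mul]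
    have htr0 : N 0 0 + N 1 1 = 0 := by
      have h2 : Matrix.trace N = 0 := by linear_combination (1/2 : ℂ) * htr
      simpa [Matrix.trace_fin_two] using h2
    have hdetN : N 0 0 * N 1 1 - N 0 1 * N 1 0 = 1 := by
      have := Y.2
      rwa [Matrix.det_fin_two] at this
    have hNsq : N * N = -1 := by
      ext i j
      fin_cases i <;> fin_cases j
      · simp [Matrix.mul_apply, Fin.sum_univ_two, Matrix.one_apply]
        linear_combination N 0 0 * htr0 - hdetN
      · simp [Matrix.mul_apply, Fin.sum_univ_two, Matrix.one_apply]
        linear_combination N 0 1 * htr0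
      · simp [Matrix.mul_apply, Fin.sum_univ_two, Matrix.one_apply]
        linear_combination N 1 0 * htr0
      · simp [Matrix.mul_apply, Fin.sum_univ_two, Matrix.one_apply]
        linear_combination N 1 1 * htr0 - hdetN
    apply hy
    apply sq_central_finOrder
    refine Matrix.SpecialLinearGroup.mem_center_iff.mpr ⟨-1, by norm_num, ?_⟩
    have hYsq : ((Y ^ 2 : SL2C) : Matrix (Fin 2) (Fin 2) ℂ) = -1 := by
      rw [Matrix.SpecialLinearGroup.coe_pow, pow_two]; exact hNsq
    rw [hYsq]
    ext i j
    fin_cases i <;> fin_cases j <;>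
      simp [Matrix.scalar_apply, Matrix.one_apply, Matrix.diagonal]

lemma nonscalar (Y : SL2C) (hy : ¬ IsOfFinOrder (QuotientGroup.mk Y : PSL2C)) :
    (Y : Matrix (Fin 2) (Fin 2) ℂ) 0 1 ≠ 0 ∨ (Y : Matrix (Fin 2) (Fin 2) ℂ) 1 0 ≠ 0 ∨
      (Y : Matrix (Fin 2) (Fin 2) ℂ) 0 0 ≠ (Y : Matrix (Fin 2) (Fin 2) ℂ) 1 1 := by
  by_contra hcon
  push_neg at hcon
  obtain ⟨hb, hc, had⟩ := hcon
  apply hy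
  have hdet := Y.2
  rw [Matrix.det_fin_two] at hdet
  have hYc : Y ∈ Subgroup.center SL2C := by
    refine Matrix.SpecialLinearGroup.mem_center_iff.mpr
      ⟨(Y : Matrix (Fin 2) (Fin 2) ℂ) 0 0, ?_, ?_⟩
    · rw [Fintype.card_fin]
      linear_combination hdet + (Y : Matrix (Fin 2) (Fin 2) ℂ) 0 0 * had +
        (Y : Matrix (Fin 2) (Fin 2) ℂ) 1 0 * hb
    · ext i j
      fin_cases i <;> fin_cases j <;>
        simp [Matrix.scalar_apply, Matrix.diagonal, hb, hc, had]
  rw [(QuotientGroup.eq_one_iff Y).mpr hYc]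
  exact IsOfFinOrder.one

/-- Commutation Transitive, part (i): if `x`, `y`, `z` are elements of `PSL(2,ℂ)` of
infinite order such that `x` commutes with `y` and `y` commutes with `z`, then `x`
commutes with `z`. -/
theorem commutation_transitive (x y z : PSL2C)
    (hx : ¬ IsOfFinOrder x) (hy : ¬ IsOfFinOrder y) (hz : ¬ IsOfFinOrder z)
    (hxy : Commute x y) (hyz : Commute y z) :
    Commute x z := by
  obtain ⟨X, rfl⟩ := QuotientGroup.mk_surjective x
  obtain ⟨Y, rfl⟩ := QuotientGroup.mk_surjective y
  obtain ⟨Z, rfl⟩ := QuotientGroup.mk_surjective z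
  have hXY : X * Y = Y * X := exact_commute X Y hy hxy
  have hZY : Z * Y = Y * Z := exact_commute Z Y hy hyz.symm
  set M : Matrix (Fin 2) (Fin 2) ℂ := (X : Matrix (Fin 2) (Fin 2) ℂ) with hM
  set N : Matrix (Fin 2) (Fin 2) ℂ := (Y : Matrix (Fin 2) (Fin 2) ℂ) with hN
  set P : Matrix (Fin 2) (Fin 2) ℂ := (Z : Matrix (Fin 2) (Fin 2) ℂ) with hP
  have hXYv : M * N = N * M := by
    rw [hM, hN, ← Matrix.SpecialLinearGroup.coe_mul, ← Matrix.SpecialLinearGroup.coe_mul, hXY]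
  have hZYv : P * N = N * P := by
    rw [hP, hN, ← Matrix.SpecialLinearGroup.coe_mul, ← Matrix.SpecialLinearGroup.coe_mul, hZY]
  have E1 : M 0 0 * N 0 0 + M 0 1 * N 1 0 = N 0 0 * M 0 0 + N 0 1 * M 1 0 := by
    simpa [Matrix.mul_apply, Fin.sum_univ_two] using congr_fun (congr_fun hXYv 0) 0
  have E2 : M 0 0 * N 0 1 + M 0 1 * N 1 1 = N 0 0 * M 0 1 + N 0 1 * M 1 1 := by
    simpa [Matrix.mul_apply, Fin.sum_univ_two] using congr_fun (congr_fun hXYv 0) 1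
  have E3 : M 1 0 * N 0 0 + M 1 1 * N 1 0 = N 1 0 * M 0 0 + N 1 1 * M 1 0 := by
    simpa [Matrix.mul_apply, Fin.sum_univ_two] using congr_fun (congr_fun hXYv 1) 0
  have F1 : P 0 0 * N 0 0 + P 0 1 * N 1 0 = N 0 0 * P 0 0 + N 0 1 * P 1 0 := by
    simpa [Matrix.mul_apply, Fin.sum_univ_two] using congr_fun (congr_fun hZYv 0) 0
  have F2 : P 0 0 * N 0 1 + P 0 1 * N 1 1 = N 0 0 * P 0 1 + N 0 1 * P 1 1 := by
    simpa [Matrix.mul_apply, Fin.sum_univ_two] using congr_fun (congr_fun hZYv 0) 1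
  have F3 : P 1 0 * N 0 0 + P 1 1 * N 1 0 = N 1 0 * P 0 0 + N 1 1 * P 1 0 := by
    simpa [Matrix.mul_apply, Fin.sum_univ_two] using congr_fun (congr_fun hZYv 1) 0
  obtain ⟨G1, G2, G3, G4⟩ := key_entries (N 0 0) (N 0 1) (N 1 0) (N 1 1)
    (M 0 0) (M 0 1) (M 1 0) (M 1 1) (P 0 0) (P 0 1) (P 1 0) (P 1 1)
    (nonscalar Y hy) E1 E2 E3 F1 F2 F3
  have hMP : M * P = P * M := by
    ext i j
    fin_cases i <;> fin_cases j
    · simpa [Matrix.mul_apply, Fin.sum_univ_two] using G1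
    · simpa [Matrix.mul_apply, Fin.sum_univ_two] using G2
    · simpa [Matrix.mul_apply, Fin.sum_univ_two] using G3
    · simpa [Matrix.mul_apply, Fin.sum_univ_two] using G4
  have hXZ : X * Z = Z * X := by
    refine Subtype.ext ?_
    rw [Matrix.SpecialLinearGroup.coe_mul, Matrix.SpecialLinearGroup.coe_mul]
    exact hMP
  have := congrArg (QuotientGroup.mk (s := Subgroup.center SL2C)) hXZ
  simpa [QuotientGroup.mk_mul, Commute, SemiconjBy] using this
end

section
/- Let x, y ∈ PSL(2,ℂ) be elements of infinite order such that y⁻¹ x y commutes with x, and suppose that the subgroup of PSL(2,ℂ) generated by {x, y} is discrete. Then y commutes with x. -/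
open Matrix

/-! ### Auxiliary 2×2 matrix lemmas -/

abbrev Mat2 := Matrix (Fin 2) (Fin 2) ℂ

/-- Cayley–Hamilton for 2×2 matrices. -/
lemma ch2 (A : Mat2) : A * A = (Matrix.trace A) • A - (A.det) • (1 : Mat2) := by
  ext i j
  fin_cases i <;> fin_cases j <;>
    simp [Matrix.mul_apply, Fin.sum_univ_two, Matrix.trace_fin_two, Matrix.det_fin_two,
      Matrix.one_apply] <;> ring

lemma det_aux (a b : ℂ) (A : Mat2) :
    (a • (1 : Mat2) + b • A).det = a ^ 2 + a * b * Matrix.trace A + b ^ 2 * A.det := by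
  simp [Matrix.det_fin_two, Matrix.trace_fin_two, Matrix.one_apply]
  ring

/-- The centralizer of a non-scalar 2×2 matrix is spanned by `1` and the matrix. -/
lemma cent2 {A B : Mat2} (hA : ¬ ∃ c : ℂ, A = c • (1 : Mat2)) (h : A * B = B * A) :
    ∃ a b : ℂ, B = a • (1 : Mat2) + b • A := by
  have e00 := congrFun (congrFun h 0) 0
  have e01 := congrFun (congrFun h 0) 1
  have e10 := congrFun (congrFun h 1) 0
  have e11 := congrFun (congrFun h 1) 1
  simp [Matrix.mul_apply, Fin.sum_univ_two] at e00 e01 e10 e11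
  by_cases hq : A 0 1 ≠ 0
  · refine ⟨B 0 0 - (B 0 1 / A 0 1) * A 0 0, B 0 1 / A 0 1, ?_⟩
    ext i j
    fin_cases i <;> fin_cases j <;> simp [Matrix.one_apply] <;> field_simp
    · linear_combination e00
    · linear_combination e01
  · push_neg at hq
    by_cases hr : A 1 0 ≠ 0
    · refine ⟨B 0 0 - (B 1 0 / A 1 0) * A 0 0, B 1 0 / A 1 0, ?_⟩
      ext i j
      fin_cases i <;> fin_cases j <;> simp [Matrix.one_apply] <;> field_simp
      · linear_combination -e00
      · linear_combination -e10
    · push_neg at hr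
      have hps : A 0 0 ≠ A 1 1 := by
        intro hps
        exact hA ⟨A 1 1, by ext i j; fin_cases i <;> fin_cases j <;>
          simp [Matrix.one_apply, hq, hr, hps]⟩
      have hf : B 0 1 = 0 := by
        have h2 : B 0 1 * (A 0 0 - A 1 1) = 0 := by
          rw [hq] at e01; linear_combination e01
        rcases mul_eq_zero.mp h2 with h3 | h3
        · exact h3
        · exact absurd (sub_eq_zero.mp h3) hps
      have hg : B 1 0 = 0 := by
        have h2 : B 1 0 * (A 1 1 - A 0 0) = 0 := by
          rw [hr] at e10; linear_combination e10
        rcases mul_eq_zero.mp h2 with h3 | h3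
        · exact h3
        · exact absurd (sub_eq_zero.mp h3).symm hps
      refine ⟨B 0 0 - ((B 0 0 - B 1 1) / (A 0 0 - A 1 1)) * A 0 0,
        (B 0 0 - B 1 1) / (A 0 0 - A 1 1), ?_⟩
      have hd : A 0 0 - A 1 1 ≠ 0 := sub_ne_zero.mpr hps
      ext i j
      fin_cases i <;> fin_cases j <;> simp [Matrix.one_apply, hf, hg, hq, hr] <;>
        field_simp <;> ring

lemma conj_pow2 {N M : Mat2} {c : ℂ} (h : N * M = c • (M * N)) :
    ∀ n : ℕ, N * M ^ n = c ^ n • (M ^ n * N) := by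
  intro n
  induction n with
  | zero => simp
  | succ n ih =>
    rw [pow_succ, pow_succ, ← mul_assoc, ih, smul_mul_assoc, mul_assoc, h]
    rw [mul_smul_comm, smul_smul, mul_assoc]

/-- The topology on `SL(2,ℂ)` induced from the matrix topology. -/
noncomputable instance : TopologicalSpace SL2C :=
  TopologicalSpace.induced (fun A => (A : Matrix (Fin 2) (Fin 2) ℂ)) inferInstance

lemma coe_inv' (A : SL2C) : ((A⁻¹ : SL2C) : Mat2) = (A : Mat2)⁻¹ := by
  refine (Matrix.inv_eq_left_inv ?_).symm
  rw [← Matrix.SpecialLinearGroup.coe_mul, inv_mul_cancel, Matrix.SpecialLinearGroup.coe_one]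

lemma mem_center_iff' {A : SL2C} :
    A ∈ Subgroup.center SL2C ↔ ((A : Mat2) = 1 ∨ (A : Mat2) = -1) := by
  rw [Matrix.SpecialLinearGroup.mem_center_iff]
  constructor
  · rintro ⟨r, hr, hA⟩
    simp only [Fintype.card_fin] at hr
    have hsc : (Matrix.scalar (Fin 2)) r = r • (1 : Mat2) := by
      ext i j; by_cases hij : i = j <;>
        simp [Matrix.scalar_apply, Matrix.one_apply, Matrix.diagonal_apply, hij]
    have : r = 1 ∨ r = -1 := by
      have h2 : (r - 1) * (r + 1) = 0 := by linear_combination hr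
      rcases mul_eq_zero.mp h2 with h | h
      · exact Or.inl (by linear_combination h)
      · exact Or.inr (by linear_combination h)
    rcases this with h | h
    · left; rw [← hA, hsc, h, one_smul]
    · right; rw [← hA, hsc, h]; ext i j; simp
  · rintro (h | h)
    · exact ⟨1, by norm_num, by ext i j; by_cases hij : i = j <;>
        simp [Matrix.scalar_apply, Matrix.diagonal_apply, hij, h, Matrix.one_apply]⟩
    · exact ⟨-1, by norm_num, by ext i j; by_cases hij : i = j <;>
        simp [Matrix.scalar_apply, Matrix.diagonal_apply, hij, h, Matrix.one_apply]⟩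

lemma mk_eq_one_iff' {A : SL2C} :
    (QuotientGroup.mk A : PSL2C) = 1 ↔ ((A : Mat2) = 1 ∨ (A : Mat2) = -1) := by
  rw [QuotientGroup.eq_one_iff, mem_center_iff']

lemma mk_eq_mk {A B : SL2C} (h : (QuotientGroup.mk A : PSL2C) = QuotientGroup.mk B) :
    (A : Mat2) = (B : Mat2) ∨ (A : Mat2) = -(B : Mat2) := by
  have h2 : A⁻¹ * B ∈ Subgroup.center SL2C := QuotientGroup.eq.mp h
  rw [mem_center_iff', Matrix.SpecialLinearGroup.coe_mul] at h2
  have hAA : (A : Mat2) * ((A⁻¹ : SL2C) : Mat2) = 1 := by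
    rw [← Matrix.SpecialLinearGroup.coe_mul, mul_inv_cancel, Matrix.SpecialLinearGroup.coe_one]
  rcases h2 with h3 | h3
  · left
    calc (A : Mat2) = (A : Mat2) * (((A⁻¹ : SL2C) : Mat2) * (B : Mat2)) := by
          rw [h3, mul_one]
      _ = (B : Mat2) := by rw [← mul_assoc, hAA, one_mul]
  · right
    have h4 : (B : Mat2) = -(A : Mat2) := by
      calc (B : Mat2) = (A : Mat2) * (((A⁻¹ : SL2C) : Mat2) * (B : Mat2)) := by
            rw [← mul_assoc, hAA, one_mul]
        _ = (A : Mat2) * (-1) := by rw [h3]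
        _ = -(A : Mat2) := by rw [mul_neg_one]
    rw [h4, neg_neg]

/-- In a discrete subgroup there is no nontrivial sequence converging to `1`. -/
lemma discrete_no_small (H : Subgroup PSL2C) (hd : DiscreteTopology H)
    (u : ℕ → PSL2C) (hmem : ∀ j, u j ∈ H) (hne : ∀ j, u j ≠ 1)
    (hlim : Filter.Tendsto u Filter.atTop (nhds 1)) : False := by
  have ho : IsOpen ({(1 : H)} : Set H) := isOpen_discrete _
  rw [isOpen_induced_iff] at ho
  obtain ⟨U, hU, hUeq⟩ := ho
  have h1U : (1 : PSL2C) ∈ U := by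
    have h2 : (1 : H) ∈ Subtype.val ⁻¹' U := hUeq.symm ▸ Set.mem_singleton _
    exact h2
  obtain ⟨j, hj⟩ := (hlim.eventually (hU.mem_nhds h1U)).exists
  have h3 : (⟨u j, hmem j⟩ : H) ∈ Subtype.val ⁻¹' U := hj
  rw [hUeq] at h3
  exact hne j (congrArg Subtype.val h3)

lemma SL2C_tendsto {u : ℕ → SL2C} {L : SL2C}
    (h : Filter.Tendsto (fun n => ((u n : Mat2))) Filter.atTop (nhds (L : Mat2))) :
    Filter.Tendsto u Filter.atTop (nhds L) := by
  have hi : Topology.IsInducing (fun A : SL2C => (A : Mat2)) := ⟨rfl⟩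
  exact hi.tendsto_nhds_iff.mpr h

set_option maxHeartbeats 3200000 in
/-- Commutation Transitive, part (ii): if `x`, `y` are elements of `PSL(2,ℂ)` of
infinite order such that `y⁻¹ x y` commutes with `x`, and the subgroup generated by
`x` and `y` is discrete, then `y` commutes with `x`. -/
theorem commutation_transitive_ii (x y : PSL2C)
    (hx : ¬ IsOfFinOrder x) (hy : ¬ IsOfFinOrder y)
    (hcomm : Commute (y⁻¹ * x * y) x)
    (hdisc : DiscreteTopology (Subgroup.closure ({x, y} : Set PSL2C))) :
    Commute y x := by
  classical
  obtain ⟨X, hX⟩ := QuotientGroup.mk_surjective x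
  obtain ⟨Y, hY⟩ := QuotientGroup.mk_surjective y
  -- basic order facts
  have hx1 : x ≠ 1 := by rintro rfl; exact hx IsOfFinOrder.one
  have hx2 : x * x ≠ 1 := fun h => hx (isOfFinOrder_iff_pow_eq_one.mpr
    ⟨2, by norm_num, by rwa [pow_two]⟩)
  have hyk : ∀ k : ℕ, 0 < k → y ^ k ≠ 1 := fun k hk h =>
    hy (isOfFinOrder_iff_pow_eq_one.mpr ⟨k, hk, h⟩)
  set Xm : Mat2 := (X : Mat2) with hXm
  set Ym : Mat2 := (Y : Mat2) with hYm
  set Vm : Mat2 := ((Y⁻¹ : SL2C) : Mat2) with hVm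
  set t : ℂ := Matrix.trace Xm with ht
  have hdetX : Xm.det = 1 := X.prop
  have hVY : Vm * Ym = 1 := by
    rw [hVm, hYm, ← Matrix.SpecialLinearGroup.coe_mul, inv_mul_cancel,
      Matrix.SpecialLinearGroup.coe_one]
  have hYV : Ym * Vm = 1 := by
    rw [hVm, hYm, ← Matrix.SpecialLinearGroup.coe_mul, mul_inv_cancel,
      Matrix.SpecialLinearGroup.coe_one]
  -- X is non-scalar
  have hXns : ¬ ∃ c : ℂ, Xm = c • (1 : Mat2) := by
    rintro ⟨c, hc⟩
    have hdet : c ^ 2 = 1 := by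
      have := hdetX
      rw [hc, Matrix.det_smul, Matrix.det_one, Fintype.card_fin, mul_one] at this
      exact this
    have hc2 : c = 1 ∨ c = -1 := by
      have h2 : (c - 1) * (c + 1) = 0 := by linear_combination hdet
      rcases mul_eq_zero.mp h2 with h | h
      · exact Or.inl (by linear_combination h)
      · exact Or.inr (by linear_combination h)
    apply hx1
    rw [← hX, mk_eq_one_iff']
    rcases hc2 with h | h
    · left; rw [← hXm, hc, h, one_smul]
    · right; rw [← hXm, hc, h]; ext i j; simp
  -- trace of X is nonzero (else x² = 1)
  have ht0 : t ≠ 0 := by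
    intro h0
    apply hx2
    have hXX : Xm * Xm = -1 := by
      rw [ch2, ← ht, h0, hdetX, zero_smul, one_smul, zero_sub]
    have : ((X * X : SL2C) : Mat2) = -1 := by
      rw [Matrix.SpecialLinearGroup.coe_mul]; exact hXX
    rw [← hX, ← QuotientGroup.mk_mul, mk_eq_one_iff']
    exact Or.inr this
  -- the conjugate C = Y⁻¹ X Y
  obtain ⟨C, hC⟩ : ∃ C : SL2C, C = Y⁻¹ * X * Y := ⟨_, rfl⟩
  obtain ⟨Cm, hCm⟩ : ∃ M : Mat2, M = (C : Mat2) := ⟨_, rfl⟩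
  have hCmval : Cm = Vm * Xm * Ym := by
    rw [hCm, hC, Matrix.SpecialLinearGroup.coe_mul, Matrix.SpecialLinearGroup.coe_mul, hVm, hXm, hYm]
  have hmkC : (QuotientGroup.mk C : PSL2C) = y⁻¹ * x * y := by
    rw [hC, QuotientGroup.mk_mul, QuotientGroup.mk_mul, QuotientGroup.mk_inv, hX, hY]
  -- hcomm at the matrix level: Cm and Xm commute
  have hCX : Cm * Xm = Xm * Cm := by
    have h1 : (QuotientGroup.mk (C * X) : PSL2C) = QuotientGroup.mk (X * C) := by
      rw [QuotientGroup.mk_mul, QuotientGroup.mk_mul, hmkC, hX]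
      exact hcomm
    rcases mk_eq_mk h1 with h2 | h2
    · rw [Matrix.SpecialLinearGroup.coe_mul, Matrix.SpecialLinearGroup.coe_mul] at h2
      rw [hCm, hXm]
      exact h2
    · exfalso
      rw [Matrix.SpecialLinearGroup.coe_mul, Matrix.SpecialLinearGroup.coe_mul,
        ← hCm, ← hXm] at h2
      -- then trace X = - trace X, so t = 0
      apply ht0
      have hKC : ((C⁻¹ : SL2C) : Mat2) * Cm = 1 := by
        rw [hCm, ← Matrix.SpecialLinearGroup.coe_mul, inv_mul_cancel,
          Matrix.SpecialLinearGroup.coe_one]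
      have htr : Matrix.trace Xm = - Matrix.trace Xm := by
        calc Matrix.trace Xm
            = Matrix.trace ((((C⁻¹ : SL2C) : Mat2) * Cm) * Xm) := by rw [hKC, one_mul]
          _ = Matrix.trace (((C⁻¹ : SL2C) : Mat2) * (Cm * Xm)) := by rw [mul_assoc]
          _ = Matrix.trace (((C⁻¹ : SL2C) : Mat2) * (-(Xm * Cm))) := by rw [h2]
          _ = - Matrix.trace (((C⁻¹ : SL2C) : Mat2) * (Xm * Cm)) := by
                rw [mul_neg, Matrix.trace_neg]
          _ = - Matrix.trace ((Xm * Cm) * ((C⁻¹ : SL2C) : Mat2)) := by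
                rw [Matrix.trace_mul_comm]
          _ = - Matrix.trace (Xm * (Cm * ((C⁻¹ : SL2C) : Mat2))) := by rw [mul_assoc]
          _ = - Matrix.trace Xm := by
                rw [hCm, ← Matrix.SpecialLinearGroup.coe_mul, mul_inv_cancel,
                  Matrix.SpecialLinearGroup.coe_one, mul_one]
      rw [← ht] at htr
      linear_combination htr / 2
  -- C lies in the span of 1 and X
  obtain ⟨a, b, hZ⟩ : ∃ a b : ℂ, Cm = a • (1 : Mat2) + b • Xm := cent2 hXns hCX.symm
  -- trace and determinant equations
  have htrC : Matrix.trace Cm = t := by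
    calc Matrix.trace Cm = Matrix.trace (Vm * Xm * Ym) := by rw [hCmval]
      _ = Matrix.trace (Ym * (Vm * Xm)) := by rw [Matrix.trace_mul_comm]
      _ = Matrix.trace ((Ym * Vm) * Xm) := by rw [mul_assoc]
      _ = t := by rw [hYV, one_mul, ht]
  have hdetC : Cm.det = 1 := by rw [hCm]; exact C.prop
  have h1 : 2 * a + b * t = t := by
    have := htrC
    rw [hZ, Matrix.trace_add, Matrix.trace_smul, Matrix.trace_smul, Matrix.trace_one, ← ht] at this
    simp only [Fintype.card_fin, smul_eq_mul] at this
    linear_combination this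
  have h2 : a ^ 2 + a * b * t + b ^ 2 = 1 := by
    have := hdetC
    rw [hZ, det_aux, ← ht, hdetX, mul_one] at this
    exact this
  have hT : (1 - b ^ 2) * (t ^ 2 - 4) = 0 := by
    linear_combination 4 * h2 - (2 * a + t + b * t) * h1
  -- the commuting case b = 1
  by_cases hb1 : b = 1
  · have ha0 : a = 0 := by rw [hb1] at h1; linear_combination h1 / 2
    have hCmX : Cm = Xm := by rw [hZ, ha0, hb1]; module
    have hCXeq : C = X := by
      have h6 : (C : Mat2) = (X : Mat2) := by rw [← hCm, ← hXm]; exact hCmX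
      exact Subtype.coe_injective h6
    have hYX : Y * X = X * Y := by
      have h6 : Y * C = X * Y := by rw [hC]; group
      calc Y * X = Y * C := by rw [hCXeq]
        _ = X * Y := h6
    show y * x = x * y
    rw [← hX, ← hY, ← QuotientGroup.mk_mul, ← QuotientGroup.mk_mul]
    exact congrArg _ hYX
  · exfalso
    by_cases ht4 : t ^ 2 - 4 = 0
    · -- parabolic case: t = ±2
      obtain ⟨σ, hσ1, hσt⟩ : ∃ σ : ℂ, σ * σ = 1 ∧ t = 2 * σ := by
        have h3 : (t - 2) * (t + 2) = 0 := by linear_combination ht4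
        rcases mul_eq_zero.mp h3 with h | h
        · exact ⟨1, by norm_num, by linear_combination h⟩
        · exact ⟨-1, by norm_num, by linear_combination h⟩
      have hσ0 : σ ≠ 0 := by
        intro h; rw [h, mul_zero] at hσ1; exact one_ne_zero hσ1.symm
      have hσpm : σ = 1 ∨ σ = -1 := by
        have h3 : (σ - 1) * (σ + 1) = 0 := by linear_combination hσ1
        rcases mul_eq_zero.mp h3 with h | h
        · exact Or.inl (by linear_combination h)
        · exact Or.inr (by linear_combination h)
      obtain ⟨N, hN⟩ : ∃ N : Mat2, N = Xm - σ • (1 : Mat2) := ⟨_, rfl⟩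
      have hXmN : Xm = σ • (1 : Mat2) + N := by rw [hN]; module
      have hN2 : N * N = 0 := by
        have hexp : N * N = Xm * Xm - (2 * σ) • Xm + (σ * σ) • (1 : Mat2) := by
          rw [hN]
          simp only [sub_mul, mul_sub, smul_mul_assoc, mul_smul_comm, mul_one, one_mul, smul_smul]
          module
        rw [hexp, ch2, ← ht, hdetX, hσt, hσ1]
        module
      have hNns : ¬ ∃ c : ℂ, N = c • (1 : Mat2) := by
        rintro ⟨c, hc⟩
        exact hXns ⟨σ + c, by rw [hXmN, hc]; module⟩
      have hNne : N ≠ 0 := fun h => hNns ⟨0, by rw [h, zero_smul]⟩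
      have ha : a = σ - b * σ := by rw [hσt] at h1; linear_combination h1 / 2
      have hCmN : Cm = σ • (1 : Mat2) + b • N := by rw [hZ, ha, hXmN]; module
      have hb0 : b ≠ 0 := by
        intro h0
        apply hx1
        have hCmσ : Cm = σ • (1 : Mat2) := by rw [hCmN, h0]; module
        have hmk : (QuotientGroup.mk C : PSL2C) = 1 := by
          rw [mk_eq_one_iff', ← hCm, hCmσ]
          rcases hσpm with h | h
          · left; rw [h, one_smul]
          · right; rw [h]; ext i j; simp
        rw [hmkC] at hmk
        calc x = y * (y⁻¹ * x * y) * y⁻¹ := by group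
          _ = y * 1 * y⁻¹ := by rw [hmk]
          _ = 1 := by group
      have hYmCm : Ym * Cm = Xm * Ym := by
        have h9 : ((Y * C : SL2C) : Mat2) = ((X * Y : SL2C) : Mat2) := by
          rw [show Y * C = X * Y from by rw [hC]; group]
        rw [Matrix.SpecialLinearGroup.coe_mul, Matrix.SpecialLinearGroup.coe_mul] at h9
        rw [hYm, hXm, hCm]
        exact h9
      have hkey : N * Ym = b • (Ym * N) := by
        have h10 : Ym * (σ • (1 : Mat2) + b • N) = (σ • (1 : Mat2) + N) * Ym := by
          rw [← hCmN, ← hXmN]; exact hYmCm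
        have h11 : σ • Ym + b • (Ym * N) = σ • Ym + N * Ym := by
          calc σ • Ym + b • (Ym * N) = Ym * (σ • (1 : Mat2) + b • N) := by
                simp only [mul_add, mul_smul_comm, mul_one, smul_smul]
            _ = (σ • (1 : Mat2) + N) * Ym := h10
            _ = σ • Ym + N * Ym := by simp only [add_mul, smul_mul_assoc, one_mul]
        exact (add_left_cancel h11).symm
      have hVN : N * Vm = b⁻¹ • (Vm * N) := by
        have h12 : Vm * N = b • (N * Vm) := by
          have h13 : Vm * (N * Ym) * Vm = Vm * (b • (Ym * N)) * Vm := by rw [hkey]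
          calc Vm * N = Vm * N * (Ym * Vm) := by rw [hYV, mul_one]
            _ = Vm * (N * Ym) * Vm := by simp only [mul_assoc]
            _ = Vm * (b • (Ym * N)) * Vm := h13
            _ = b • (((Vm * Ym) * N) * Vm) := by
                  simp only [mul_smul_comm, smul_mul_assoc, mul_assoc]
            _ = b • (N * Vm) := by rw [hVY, one_mul]
        rw [h12, smul_smul, inv_mul_cancel₀ hb0, one_smul]
      have hVYn : ∀ n : ℕ, Vm ^ n * Ym ^ n = 1 := by
        intro n
        induction n with
        | zero => simp
        | succ n ih =>
          rw [pow_succ, pow_succ']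
          calc Vm ^ n * Vm * (Ym * Ym ^ n) = Vm ^ n * (Vm * Ym) * Ym ^ n := by
                simp only [mul_assoc]
            _ = 1 := by rw [hVY, mul_one, ih]
      have hYVn : ∀ n : ℕ, Ym ^ n * Vm ^ n = 1 := by
        intro n
        induction n with
        | zero => simp
        | succ n ih =>
          rw [pow_succ, pow_succ']
          calc Ym ^ n * Ym * (Vm * Vm ^ n) = Ym ^ n * (Ym * Vm) * Vm ^ n := by
                simp only [mul_assoc]
            _ = 1 := by rw [hYV, mul_one, ih]
      have hpowA : ∀ n : ℕ, Vm ^ n * N * Ym ^ n = b ^ n • N := by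
        intro n
        have h13 := conj_pow2 hkey n
        calc Vm ^ n * N * Ym ^ n = Vm ^ n * (N * Ym ^ n) := by rw [mul_assoc]
          _ = Vm ^ n * (b ^ n • (Ym ^ n * N)) := by rw [h13]
          _ = b ^ n • ((Vm ^ n * Ym ^ n) * N) := by rw [mul_smul_comm, ← mul_assoc]
          _ = b ^ n • N := by rw [hVYn n, one_mul]
      have hpowB : ∀ n : ℕ, Ym ^ n * N * Vm ^ n = (b⁻¹) ^ n • N := by
        intro n
        have h13 := conj_pow2 hVN n
        calc Ym ^ n * N * Vm ^ n = Ym ^ n * (N * Vm ^ n) := by rw [mul_assoc]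
          _ = Ym ^ n * ((b⁻¹) ^ n • (Vm ^ n * N)) := by rw [h13]
          _ = (b⁻¹) ^ n • ((Ym ^ n * Vm ^ n) * N) := by rw [mul_smul_comm, ← mul_assoc]
          _ = (b⁻¹) ^ n • N := by rw [hYVn n, one_mul]
      have hcoeYn : ∀ n : ℕ, ((Y ^ n : SL2C) : Mat2) = Ym ^ n := by
        intro n; rw [Matrix.SpecialLinearGroup.coe_pow, hYm]
      have hcoeVn : ∀ n : ℕ, (((Y ^ n)⁻¹ : SL2C) : Mat2) = Vm ^ n := by
        intro n; rw [← inv_pow, Matrix.SpecialLinearGroup.coe_pow, hVm]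
      have hsplit : ∀ P Q : Mat2, P * (σ • (1 : Mat2) + N) * Q = σ • (P * Q) + P * N * Q := by
        intro P Q
        simp only [mul_add, add_mul, mul_smul_comm, smul_mul_assoc, mul_one]
      have hconjA : ∀ n : ℕ, (((Y ^ n)⁻¹ * X * Y ^ n : SL2C) : Mat2)
          = σ • (1 : Mat2) + b ^ n • N := by
        intro n
        rw [Matrix.SpecialLinearGroup.coe_mul, Matrix.SpecialLinearGroup.coe_mul,
          hcoeVn, hcoeYn, ← hXm, hXmN, hsplit, hVYn n, hpowA n]
      have hconjB : ∀ n : ℕ, ((Y ^ n * X * (Y ^ n)⁻¹ : SL2C) : Mat2)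
          = σ • (1 : Mat2) + (b⁻¹) ^ n • N := by
        intro n
        rw [Matrix.SpecialLinearGroup.coe_mul, Matrix.SpecialLinearGroup.coe_mul,
          hcoeVn, hcoeYn, ← hXm, hXmN, hsplit, hYVn n, hpowB n]
      -- membership facts
      have hxH : x ∈ Subgroup.closure ({x, y} : Set PSL2C) :=
        Subgroup.subset_closure (Set.mem_insert _ _)
      have hyH : y ∈ Subgroup.closure ({x, y} : Set PSL2C) :=
        Subgroup.subset_closure (Set.mem_insert_of_mem _ rfl)
      have hSσ : ∃ S : SL2C, (S : Mat2) = σ • (1 : Mat2) := by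
        refine ⟨⟨σ • (1 : Mat2), ?_⟩, rfl⟩
        rw [Matrix.det_smul, Matrix.det_one, Fintype.card_fin, mul_one, pow_two, hσ1]
      obtain ⟨S, hS⟩ := hSσ
      have hmkS : (QuotientGroup.mk S : PSL2C) = 1 := by
        rw [mk_eq_one_iff', hS]
        rcases hσpm with h | h
        · left; rw [h, one_smul]
        · right; rw [h]; ext i j; simp
      have hmkcont : Continuous (QuotientGroup.mk : SL2C → PSL2C) := continuous_quot_mk
      -- nontriviality of conjugates of x
      have hconj_ne : ∀ g : PSL2C, g⁻¹ * x * g ≠ 1 := by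
        intro g h
        apply hx1
        calc x = g * (g⁻¹ * x * g) * g⁻¹ := by group
          _ = g * 1 * g⁻¹ := by rw [h]
          _ = 1 := by group
      rcases lt_trichotomy ‖b‖ 1 with hblt | hbeq | hbgt
      · -- |b| < 1 : y⁻ⁿ x yⁿ → 1
        refine discrete_no_small _ hdisc (fun n => (y ^ n)⁻¹ * x * y ^ n) ?_ ?_ ?_
        · intro j
          exact Subgroup.mul_mem _ (Subgroup.mul_mem _ (Subgroup.inv_mem _ (Subgroup.pow_mem _ hyH j)) hxH) (Subgroup.pow_mem _ hyH j)
        · intro j; exact hconj_ne _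
        · have hlift : Filter.Tendsto (fun n => (((Y ^ n)⁻¹ * X * Y ^ n : SL2C) : Mat2))
              Filter.atTop (nhds (S : Mat2)) := by
            simp only [hconjA, hS]
            have hb' := tendsto_pow_atTop_nhds_zero_of_norm_lt_one hblt
            have := Filter.Tendsto.const_add (σ • (1 : Mat2)) (hb'.smul_const N)
            simpa using this
          have hsl := SL2C_tendsto hlift
          have := (hmkcont.tendsto S).comp hsl
          rw [hmkS] at this
          convert this using 2 with n
          rw [Function.comp_apply, QuotientGroup.mk_mul, QuotientGroup.mk_mul,
            QuotientGroup.mk_inv, QuotientGroup.mk_pow, hX, hY]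
      · -- |b| = 1
        by_cases hroot : ∃ k : ℕ, 0 < k ∧ b ^ k = 1
        · -- b a root of unity: Yᵏ is central, contradiction with y of infinite order
          obtain ⟨k, hk, hbk⟩ := hroot
          have hNYk : N * Ym ^ k = Ym ^ k * N := by
            have := conj_pow2 hkey k
            rwa [hbk, one_smul] at this
          have hXYk : Xm * Ym ^ k = Ym ^ k * Xm := by
            rw [hXmN]
            simp only [add_mul, mul_add, smul_mul_assoc, mul_smul_comm, one_mul, mul_one]
            rw [hNYk]
          obtain ⟨c, d, hYk⟩ := cent2 hXns hXYk
          have hcoeYk : ((Y ^ k : SL2C) : Mat2) = Ym ^ k := hcoeYn k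
          have hconjYk : Vm * Ym ^ k * Ym = Ym ^ k := by
            have h10 : ((Y⁻¹ * Y ^ k * Y : SL2C) : Mat2) = ((Y ^ k : SL2C) : Mat2) := by
              rw [show Y⁻¹ * Y ^ k * Y = Y ^ k from by group]
            rw [Matrix.SpecialLinearGroup.coe_mul, Matrix.SpecialLinearGroup.coe_mul,
              hcoeYk] at h10
            rw [← hVm, ← hYm] at h10
            exact h10
          have h21 : c • (1 : Mat2) + d • Cm = c • (1 : Mat2) + d • Xm := by
            have e1 : Vm * (c • (1 : Mat2) + d • Xm) * Ym
                = c • (Vm * Ym) + d • (Vm * Xm * Ym) := by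
              simp only [mul_add, add_mul, mul_smul_comm, smul_mul_assoc, mul_one, mul_assoc]
            calc c • (1 : Mat2) + d • Cm = c • (Vm * Ym) + d • (Vm * Xm * Ym) := by
                  rw [hVY, ← hCmval]
              _ = Vm * (c • (1 : Mat2) + d • Xm) * Ym := e1.symm
              _ = Vm * Ym ^ k * Ym := by rw [← hYk]
              _ = Ym ^ k := hconjYk
              _ = c • (1 : Mat2) + d • Xm := hYk
          have h22 : (d * (b - 1)) • N = 0 := by
            have h23 : d • Cm = d • Xm := add_left_cancel h21
            rw [hCmN, hXmN] at h23
            calc (d * (b - 1)) • N = d • (σ • (1 : Mat2) + b • N) - d • (σ • (1 : Mat2) + N) := by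
                  module
              _ = 0 := by rw [h23, sub_self]
          have hd0 : d = 0 := by
            rcases smul_eq_zero.mp h22 with h | h
            · rcases mul_eq_zero.mp h with h' | h'
              · exact h'
              · exact absurd (by linear_combination h') hb1
            · exact absurd h hNne
          have hYkc : Ym ^ k = c • (1 : Mat2) := by rw [hYk, hd0]; module
          have hdetYk : c ^ 2 = 1 := by
            have hdW : (Ym ^ k).det = 1 := by rw [← hcoeYk]; exact (Y ^ k).prop
            rw [hYkc, Matrix.det_smul, Matrix.det_one, Fintype.card_fin, mul_one] at hdW
            exact hdW
          have hc2 : c = 1 ∨ c = -1 := by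
            have h15 : (c - 1) * (c + 1) = 0 := by linear_combination hdetYk
            rcases mul_eq_zero.mp h15 with h | h
            · exact Or.inl (by linear_combination h)
            · exact Or.inr (by linear_combination h)
          apply hyk k hk
          rw [← hY, ← QuotientGroup.mk_pow, mk_eq_one_iff', hcoeYk]
          rcases hc2 with h | h
          · left; rw [hYkc, h, one_smul]
          · right; rw [hYkc, h]; ext i j; simp
        · -- b on the unit circle, not a root of unity
          push_neg at hroot
          have hbsphere : ∀ n : ℕ, (b ^ n : ℂ) ∈ Metric.sphere (0 : ℂ) 1 := by
            intro n
            rw [mem_sphere_zero_iff_norm, norm_pow, hbeq, one_pow]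
          obtain ⟨cl, hclmem, φ, hφ, hφlim⟩ :=
            (isCompact_sphere (0 : ℂ) 1).tendsto_subseq hbsphere
          have hcl0 : cl ≠ 0 := by
            rw [mem_sphere_zero_iff_norm] at hclmem
            intro h; rw [h, norm_zero] at hclmem; exact one_ne_zero hclmem.symm
          set m : ℕ → ℕ := fun j => φ (j + 1) - φ j with hm
          have hmpos : ∀ j, 0 < m j := fun j => Nat.sub_pos_of_lt (hφ (Nat.lt_succ_self j))
          have hbm : Filter.Tendsto (fun j => b ^ m j) Filter.atTop (nhds 1) := by
            have hshift : Filter.Tendsto (fun j => b ^ φ (j + 1)) Filter.atTop (nhds cl) :=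
              hφlim.comp (Filter.tendsto_add_atTop_nat 1)
            have hdiv : Filter.Tendsto (fun j => b ^ φ (j + 1) * (b ^ φ j)⁻¹)
                Filter.atTop (nhds (cl * cl⁻¹)) :=
              hshift.mul (hφlim.inv₀ hcl0)
            rw [mul_inv_cancel₀ hcl0] at hdiv
            convert hdiv using 2 with j
            rw [hm]
            rw [pow_sub₀ b hb0 (hφ (Nat.lt_succ_self j)).le]
          -- the elements wⱼ = y^(-mⱼ) x y^(mⱼ) x⁻¹
          have hXinv : ((X⁻¹ : SL2C) : Mat2) = σ • (1 : Mat2) - N := by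
            rw [coe_inv', ← hXm]
            refine Matrix.inv_eq_right_inv ?_
            rw [hXmN]
            have : (σ • (1 : Mat2) + N) * (σ • (1 : Mat2) - N)
                = (σ * σ) • (1 : Mat2) - N * N := by
              simp only [mul_sub, add_mul, smul_mul_assoc, mul_smul_comm, smul_smul,
                mul_one, one_mul]
              module
            rw [this, hσ1, hN2]
            module
          have hDcoe : ∀ n : ℕ, (((Y ^ n)⁻¹ * X * Y ^ n * X⁻¹ : SL2C) : Mat2)
              = 1 + (σ * (b ^ n - 1)) • N := by
            intro n
            rw [Matrix.SpecialLinearGroup.coe_mul, hconjA n, hXinv]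
            have : (σ • (1 : Mat2) + b ^ n • N) * (σ • (1 : Mat2) - N)
                = (σ * σ) • (1 : Mat2) + (σ * (b ^ n - 1)) • N - (b ^ n) • (N * N) := by
              simp only [mul_sub, add_mul, smul_mul_assoc, mul_smul_comm, smul_smul,
                mul_one, one_mul]
              module
            rw [this, hσ1, hN2]
            module
          refine discrete_no_small _ hdisc
            (fun j => (y ^ m j)⁻¹ * x * y ^ m j * x⁻¹) ?_ ?_ ?_
          · intro j
            exact Subgroup.mul_mem _
              (Subgroup.mul_mem _
                (Subgroup.mul_mem _ (Subgroup.inv_mem _ (Subgroup.pow_mem _ hyH _)) hxH)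
                (Subgroup.pow_mem _ hyH _))
              (Subgroup.inv_mem _ hxH)
          · intro j h
            -- otherwise b ^ m j = 1
            have hmkD : (QuotientGroup.mk ((Y ^ m j)⁻¹ * X * Y ^ m j * X⁻¹) : PSL2C) = 1 := by
              rw [QuotientGroup.mk_mul, QuotientGroup.mk_mul, QuotientGroup.mk_mul,
                QuotientGroup.mk_inv, QuotientGroup.mk_inv, QuotientGroup.mk_pow, hX, hY]
              exact h
            rw [mk_eq_one_iff', hDcoe] at hmkD
            have hs0 : σ * (b ^ m j - 1) ≠ 0 := by
              intro h'
              rcases mul_eq_zero.mp h' with h'' | h''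
              · exact hσ0 h''
              · exact hroot (m j) (hmpos j) (by linear_combination h'')
            rcases hmkD with h' | h'
            · have : (σ * (b ^ m j - 1)) • N = 0 := by
                have := congrArg (fun M => M - (1 : Mat2)) h'
                simpa using this
              rcases smul_eq_zero.mp this with h'' | h''
              · exact hs0 h''
              · exact hNne h''
            · have h24 : (σ * (b ^ m j - 1)) • N = (-2 : ℂ) • (1 : Mat2) := by
                have h25 := congrArg (fun M => M - (1 : Mat2)) h'
                rw [add_sub_cancel_left] at h25
                rw [h25]
                module
              apply hNns
              refine ⟨(σ * (b ^ m j - 1))⁻¹ * (-2), ?_⟩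
              calc N = ((σ * (b ^ m j - 1))⁻¹ * (σ * (b ^ m j - 1))) • N := by
                    rw [inv_mul_cancel₀ hs0, one_smul]
                _ = (σ * (b ^ m j - 1))⁻¹ • ((σ * (b ^ m j - 1)) • N) := by rw [smul_smul]
                _ = (σ * (b ^ m j - 1))⁻¹ • ((-2 : ℂ) • (1 : Mat2)) := by rw [h24]
                _ = ((σ * (b ^ m j - 1))⁻¹ * (-2)) • (1 : Mat2) := by rw [smul_smul]
          · have hlift : Filter.Tendsto
                (fun j => (((Y ^ m j)⁻¹ * X * Y ^ m j * X⁻¹ : SL2C) : Mat2))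
                Filter.atTop (nhds ((1 : SL2C) : Mat2)) := by
              simp only [hDcoe, Matrix.SpecialLinearGroup.coe_one]
              have h26 : Filter.Tendsto (fun j => σ * (b ^ m j - 1)) Filter.atTop (nhds 0) := by
                have := (hbm.sub_const 1).const_mul σ
                simpa using this
              have := Filter.Tendsto.const_add (1 : Mat2) (h26.smul_const N)
              simpa using this
            have hsl := SL2C_tendsto hlift
            have := (hmkcont.tendsto 1).comp hsl
            rw [QuotientGroup.mk_one] at this
            convert this using 2 with j
            rw [Function.comp_apply, QuotientGroup.mk_mul, QuotientGroup.mk_mul,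
              QuotientGroup.mk_mul, QuotientGroup.mk_inv, QuotientGroup.mk_inv,
              QuotientGroup.mk_pow, hX, hY]
      · -- |b| > 1 : yⁿ x y⁻ⁿ → 1
        refine discrete_no_small _ hdisc (fun n => y ^ n * x * (y ^ n)⁻¹) ?_ ?_ ?_
        · intro j
          exact Subgroup.mul_mem _ (Subgroup.mul_mem _ (Subgroup.pow_mem _ hyH j) hxH)
            (Subgroup.inv_mem _ (Subgroup.pow_mem _ hyH j))
        · intro j h
          apply hconj_ne ((y ^ j)⁻¹)
          rw [inv_inv]
          exact h
        · have hbinv : ‖b⁻¹‖ < 1 := by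
            rw [norm_inv]
            rw [inv_lt_one_iff₀]
            right; exact hbgt
          have hlift : Filter.Tendsto (fun n => ((Y ^ n * X * (Y ^ n)⁻¹ : SL2C) : Mat2))
              Filter.atTop (nhds (S : Mat2)) := by
            simp only [hconjB, hS]
            have hb' := tendsto_pow_atTop_nhds_zero_of_norm_lt_one hbinv
            have := Filter.Tendsto.const_add (σ • (1 : Mat2)) (hb'.smul_const N)
            simpa using this
          have hsl := SL2C_tendsto hlift
          have := (hmkcont.tendsto S).comp hsl
          rw [hmkS] at this
          convert this using 2 with n
          rw [Function.comp_apply, QuotientGroup.mk_mul, QuotientGroup.mk_mul,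
            QuotientGroup.mk_inv, QuotientGroup.mk_pow, hX, hY]
    · -- distinct eigenvalues: b = -1 forced
      have hb2 : b ^ 2 = 1 := by
        rcases mul_eq_zero.mp hT with h | h
        · linear_combination -h
        · exact absurd h ht4
      have hbm1 : b = -1 := by
        have h3 : (b - 1) * (b + 1) = 0 := by linear_combination hb2
        rcases mul_eq_zero.mp h3 with h | h
        · exact absurd (by linear_combination h) hb1
        · linear_combination h
      have hat : a = t := by rw [hbm1] at h1; linear_combination h1 / 2
      have hCmval2 : Cm = t • (1 : Mat2) - Xm := by rw [hZ, hat, hbm1]; module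
      have hCXone : Cm * Xm = 1 := by
        rw [hCmval2, sub_mul, smul_mul_assoc, one_mul, ch2, ← ht, hdetX]
        module
      have hCinv : C = X⁻¹ := by
        have h6 : C * X = 1 := by
          apply Subtype.coe_injective
          show ((C * X : SL2C) : Mat2) = ((1 : SL2C) : Mat2)
          rw [Matrix.SpecialLinearGroup.coe_mul, Matrix.SpecialLinearGroup.coe_one,
            ← hCm, ← hXm, hCXone]
        exact eq_inv_of_mul_eq_one_left h6
      have hconj : Y⁻¹ * X * Y = X⁻¹ := by rw [← hC, hCinv]
      have h5 : Y⁻¹ * X⁻¹ * Y = X := by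
        have h7 : (Y⁻¹ * X * Y)⁻¹ = X := by rw [hconj, inv_inv]
        calc Y⁻¹ * X⁻¹ * Y = (Y⁻¹ * X * Y)⁻¹ := by group
          _ = X := h7
      -- W = Y² commutes with X
      have hWX : X * (Y * Y) = (Y * Y) * X := by
        have h8 : (Y * Y)⁻¹ * X * (Y * Y) = X := by
          calc (Y * Y)⁻¹ * X * (Y * Y) = Y⁻¹ * (Y⁻¹ * X * Y) * Y := by group
            _ = Y⁻¹ * X⁻¹ * Y := by rw [hconj]
            _ = X := h5
        calc X * (Y * Y) = (Y * Y) * ((Y * Y)⁻¹ * X * (Y * Y)) := by group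
          _ = (Y * Y) * X := by rw [h8]
      obtain ⟨Wm, hWm⟩ : ∃ M : Mat2, M = ((Y * Y : SL2C) : Mat2) := ⟨_, rfl⟩
      have hWXm : Xm * Wm = Wm * Xm := by
        have h9 : ((X * (Y * Y) : SL2C) : Mat2) = (((Y * Y) * X : SL2C) : Mat2) := by rw [hWX]
        rw [Matrix.SpecialLinearGroup.coe_mul, Matrix.SpecialLinearGroup.coe_mul] at h9
        rw [hWm, hXm]
        exact h9
      obtain ⟨c, d, hW⟩ : ∃ c d : ℂ, Wm = c • (1 : Mat2) + d • Xm := cent2 hXns hWXm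
      -- conjugating W by Y fixes W but sends X to t•1 - X
      have hVXY : Vm * Xm * Ym = t • (1 : Mat2) - Xm := by
        rw [← hCmval, hCmval2]
      have hconjW : Vm * Wm * Ym = Wm := by
        have h10 : ((Y⁻¹ * (Y * Y) * Y : SL2C) : Mat2) = ((Y * Y : SL2C) : Mat2) := by
          have : Y⁻¹ * (Y * Y) * Y = Y * Y := by group
          rw [this]
        rw [Matrix.SpecialLinearGroup.coe_mul, Matrix.SpecialLinearGroup.coe_mul] at h10
        rw [hWm, hVm, hYm]
        exact h10
      have h11 : Wm = c • (1 : Mat2) + d • (t • (1 : Mat2) - Xm) := by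
        calc Wm = Vm * Wm * Ym := hconjW.symm
          _ = Vm * (c • (1 : Mat2) + d • Xm) * Ym := by rw [← hW]
          _ = c • (Vm * Ym) + d • (Vm * Xm * Ym) := by
                simp only [mul_add, add_mul, mul_smul_comm, smul_mul_assoc, mul_one, mul_assoc]
          _ = c • (1 : Mat2) + d • (t • (1 : Mat2) - Xm) := by rw [hVY, hVXY]
      have h12 : (2 * d) • Xm = (d * t) • (1 : Mat2) := by
        have h13 : c • (1 : Mat2) + d • Xm = c • (1 : Mat2) + d • (t • (1 : Mat2) - Xm) := by
          rw [← hW, ← h11]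
        have h14 : d • Xm = d • (t • (1 : Mat2) - Xm) := add_left_cancel h13
        calc (2 * d) • Xm = d • Xm + d • Xm := by module
          _ = d • (t • (1 : Mat2) - Xm) + d • Xm := by rw [h14]
          _ = (d * t) • (1 : Mat2) := by module
      -- d must vanish, else X is scalar
      have hd0 : d = 0 := by
        by_contra hd
        apply hXns
        refine ⟨(2 * d)⁻¹ * (d * t), ?_⟩
        have h2d : (2 * d) ≠ 0 := by
          simp only [ne_eq, mul_eq_zero, not_or]
          exact ⟨two_ne_zero, hd⟩
        calc Xm = ((2 * d)⁻¹ * (2 * d)) • Xm := by rw [inv_mul_cancel₀ h2d, one_smul]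
          _ = (2 * d)⁻¹ • ((2 * d) • Xm) := by rw [smul_smul]
          _ = (2 * d)⁻¹ • ((d * t) • (1 : Mat2)) := by rw [h12]
          _ = ((2 * d)⁻¹ * (d * t)) • (1 : Mat2) := by rw [smul_smul]
      -- hence Y² is central, contradicting infinite order of y
      have hWc : Wm = c • (1 : Mat2) := by rw [hW, hd0]; module
      have hdetW : c ^ 2 = 1 := by
        have hdW : Wm.det = 1 := by rw [hWm]; exact (Y * Y).prop
        rw [hWc, Matrix.det_smul, Matrix.det_one, Fintype.card_fin, mul_one] at hdW
        exact hdW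
      have hc2 : c = 1 ∨ c = -1 := by
        have h15 : (c - 1) * (c + 1) = 0 := by linear_combination hdetW
        rcases mul_eq_zero.mp h15 with h | h
        · exact Or.inl (by linear_combination h)
        · exact Or.inr (by linear_combination h)
      apply hyk 2 (by norm_num)
      rw [pow_two, ← hY, ← QuotientGroup.mk_mul, mk_eq_one_iff']
      rcases hc2 with h | h
      · left; rw [← hWm, hWc, h, one_smul]
      · right; rw [← hWm, hWc, h]; ext i j; simp
end

section
/- Let x, y ∈ PSL(2,ℂ) be elements of infinite order, and let A, B ∈ SL(2,ℂ) be matrix representatives of x and y respectively. Then x and y commute in PSL(2,ℂ) if and only if A and B have exactly the same eigenvectors; that is, if and only if for every nonzero v ∈ ℂ², v is an eigenvector of A exactly when v is an eigenvector of B. -/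
/-- A nonzero vector `v ∈ ℂ²` is an eigenvector of `A ∈ SL(2,ℂ)`. -/
def IsEigenvectorSL2C (A : SL2C) (v : Fin 2 → ℂ) : Prop :=
  ∃ c : ℂ, Matrix.mulVec (A : Matrix (Fin 2) (Fin 2) ℂ) v = c • v


lemma eig_iff (A : SL2C) (v : Fin 2 → ℂ) (hv : v ≠ 0) :
    IsEigenvectorSL2C A v ↔
      (A : Matrix (Fin 2) (Fin 2) ℂ) 1 0 * v 0 ^ 2 +
        ((A : Matrix (Fin 2) (Fin 2) ℂ) 1 1 - (A : Matrix (Fin 2) (Fin 2) ℂ) 0 0) * (v 0 * v 1)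
        - (A : Matrix (Fin 2) (Fin 2) ℂ) 0 1 * v 1 ^ 2 = 0 := by
  constructor
  · rintro ⟨c, hc⟩
    have h0 := congrFun hc 0
    have h1 := congrFun hc 1
    simp [Matrix.mulVec, dotProduct, Fin.sum_univ_two] at h0 h1
    linear_combination v 0 * h1 - v 1 * h0
  · intro h
    have hv' : v 0 ≠ 0 ∨ v 1 ≠ 0 := by
      by_contra hcon
      push_neg at hcon
      exact hv (funext fun i => by fin_cases i <;> simp [hcon.1, hcon.2])
    rcases hv' with h0 | h1
    · refine ⟨((A : Matrix (Fin 2) (Fin 2) ℂ) 0 0 * v 0 + (A : Matrix (Fin 2) (Fin 2) ℂ) 0 1 * v 1) / v 0, ?_⟩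
      funext i
      fin_cases i <;>
        simp [Matrix.mulVec, dotProduct, Fin.sum_univ_two] <;>
        field_simp <;> linear_combination h
    · refine ⟨((A : Matrix (Fin 2) (Fin 2) ℂ) 1 0 * v 0 + (A : Matrix (Fin 2) (Fin 2) ℂ) 1 1 * v 1) / v 1, ?_⟩
      funext i
      fin_cases i <;>
        simp [Matrix.mulVec, dotProduct, Fin.sum_univ_two] <;>
        field_simp <;> linear_combination -h


lemma quad_roots (p q r : ℂ) (hp : p ≠ 0) :
    ∃ t1 t2 : ℂ, q = -(p * (t1 + t2)) ∧ r = p * (t1 * t2) := by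
  obtain ⟨s, hs⟩ := IsAlgClosed.exists_pow_nat_eq (k := ℂ) (q ^ 2 - 4 * p * r) (n := 2) (by norm_num)
  refine ⟨(-q + s) / (2 * p), (-q - s) / (2 * p), ?_, ?_⟩
  · field_simp; ring
  · field_simp
    linear_combination hs

lemma exists_ratio (p q r p' q' r' : ℂ) (hB : ¬(p' = 0 ∧ q' = 0 ∧ r' = 0))
    (m1 : p * q' = p' * q) (m2 : p * r' = p' * r) (m3 : q * r' = q' * r)
    (hA : ¬(p = 0 ∧ q = 0 ∧ r = 0)) :
    ∃ β : ℂ, β ≠ 0 ∧ p' = β * p ∧ q' = β * q ∧ r' = β * r := by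
  by_cases hp : p = 0
  · by_cases hq : q = 0
    · have hr : r ≠ 0 := fun h => hA ⟨hp, hq, h⟩
      have hp' : p' = 0 := by
        have : p' * r = 0 := by rw [← m2, hp]; ring
        rcases mul_eq_zero.1 this with h | h
        · exact h
        · exact absurd h hr
      have hq' : q' = 0 := by
        have : q' * r = 0 := by rw [← m3, hq]; ring
        rcases mul_eq_zero.1 this with h | h
        · exact h
        · exact absurd h hr
      have hr' : r' ≠ 0 := fun h => hB ⟨hp', hq', h⟩
      exact ⟨r' / r, div_ne_zero hr' hr, by simp [hp', hp], by simp [hq', hq], by field_simp⟩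
    · have hq' : q' ≠ 0 := by
        intro hq'
        have hp' : p' = 0 := by
          have : p' * q = 0 := by rw [← m1, hq']; ring
          rcases mul_eq_zero.1 this with h | h
          · exact h
          · exact absurd h hq
        have hr' : r' = 0 := by
          have : q * r' = 0 := by rw [m3, hq']; ring
          rcases mul_eq_zero.1 this with h | h
          · exact absurd h hq
          · exact h
        exact hB ⟨hp', hq', hr'⟩
      refine ⟨q' / q, div_ne_zero hq' hq, ?_, by field_simp, ?_⟩
      · field_simp
        linear_combination -m1
      · field_simp
        linear_combination m3
  · have hp' : p' ≠ 0 := by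
      intro hp'
      have hq' : q' = 0 := by
        have : p * q' = 0 := by rw [m1, hp']; ring
        rcases mul_eq_zero.1 this with h | h
        · exact absurd h hp
        · exact h
      have hr' : r' = 0 := by
        have : p * r' = 0 := by rw [m2, hp']; ring
        rcases mul_eq_zero.1 this with h | h
        · exact absurd h hp
        · exact h
      exact hB ⟨hp', hq', hr'⟩
    refine ⟨p' / p, div_ne_zero hp' hp, by field_simp, ?_, ?_⟩
    · field_simp
      linear_combination m1
    · field_simp
      linear_combination m2


lemma minors_of_same_zeros (p q r p' q' r' : ℂ)
    (hA : ¬(p = 0 ∧ q = 0 ∧ r = 0))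
    (h : ∀ t u : ℂ, (t ≠ 0 ∨ u ≠ 0) →
      (p * t ^ 2 + q * (t * u) + r * u ^ 2 = 0 ↔ p' * t ^ 2 + q' * (t * u) + r' * u ^ 2 = 0)) :
    p * q' = p' * q ∧ p * r' = p' * r ∧ q * r' = q' * r := by
  have hpp : p = 0 ↔ p' = 0 := by
    have := h 1 0 (Or.inl one_ne_zero)
    simpa using this
  by_cases hp : p = 0
  · have hp' : p' = 0 := hpp.mp hp
    by_cases hq : q = 0
    · have hr : r ≠ 0 := fun hh => hA ⟨hp, hq, hh⟩
      have hq' : q' = 0 := by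
        by_contra hq'
        have hpt := (h (-r') q' (Or.inr hq')).mpr (by rw [hp']; ring)
        rw [hp, hq] at hpt
        simp at hpt
        rcases hpt with hh | hh
        · exact hr hh
        · exact hq' hh
      refine ⟨by rw [hp, hp']; ring, by rw [hp, hp']; ring, by rw [hq, hq']; ring⟩
    · have key := (h (-r) q (Or.inr hq)).mp (by rw [hp]; ring)
      rw [hp'] at key
      have : q * (q * r' - q' * r) = 0 := by linear_combination key
      rcases mul_eq_zero.1 this with hh | hh
      · exact absurd hh hq
      · exact ⟨by rw [hp, hp']; ring, by rw [hp, hp']; ring, by linear_combination hh⟩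
  · have hp' : p' ≠ 0 := fun hh => hp (hpp.mpr hh)
    obtain ⟨t1, t2, hq, hr⟩ := quad_roots p q r hp
    obtain ⟨u1, u2, hq', hr'⟩ := quad_roots p' q' r' hp'
    have root1 : ∀ t : ℂ, p * t ^ 2 + q * (t * 1) + r * 1 ^ 2 = p * ((t - t1) * (t - t2)) := by
      intro t; rw [hq, hr]; ring
    have root2 : ∀ t : ℂ, p' * t ^ 2 + q' * (t * 1) + r' * 1 ^ 2 = p' * ((t - u1) * (t - u2)) := by
      intro t; rw [hq', hr']; ring
    have f2z : ∀ t : ℂ, (t - t1) * (t - t2) = 0 → (t - u1) * (t - u2) = 0 := by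
      intro t ht
      have := (h t 1 (Or.inr one_ne_zero)).mp (by rw [root1]; rw [ht]; ring)
      rw [root2] at this
      exact (mul_eq_zero.1 this).resolve_left hp'
    have f1z : ∀ t : ℂ, (t - u1) * (t - u2) = 0 → (t - t1) * (t - t2) = 0 := by
      intro t ht
      have := (h t 1 (Or.inr one_ne_zero)).mpr (by rw [root2]; rw [ht]; ring)
      rw [root1] at this
      exact (mul_eq_zero.1 this).resolve_left hp
    have d1 : t1 = u1 ∨ t1 = u2 := by
      have := f2z t1 (by ring)
      rcases mul_eq_zero.1 this with hh | hh
      · exact Or.inl (by linear_combination hh)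
      · exact Or.inr (by linear_combination hh)
    have d2 : t2 = u1 ∨ t2 = u2 := by
      have := f2z t2 (by ring)
      rcases mul_eq_zero.1 this with hh | hh
      · exact Or.inl (by linear_combination hh)
      · exact Or.inr (by linear_combination hh)
    have d3 : u1 = t1 ∨ u1 = t2 := by
      have := f1z u1 (by ring)
      rcases mul_eq_zero.1 this with hh | hh
      · exact Or.inl (by linear_combination hh)
      · exact Or.inr (by linear_combination hh)
    have d4 : u2 = t1 ∨ u2 = t2 := by
      have := f1z u2 (by ring)
      rcases mul_eq_zero.1 this with hh | hh
      · exact Or.inl (by linear_combination hh)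
      · exact Or.inr (by linear_combination hh)
    have key : t1 + t2 = u1 + u2 ∧ t1 * t2 = u1 * u2 := by
      rcases d1 with h1 | h1 <;> rcases d2 with h2 | h2 <;>
        rcases d3 with h3 | h3 <;> rcases d4 with h4 | h4 <;>
        subst_vars <;> exact ⟨by ring, by ring⟩
    obtain ⟨hs, hm⟩ := key
    refine ⟨?_, ?_, ?_⟩
    · rw [hq, hq']; linear_combination (p * p') * hs
    · rw [hr, hr']; linear_combination (-(p * p')) * hm
    · rw [hq, hq', hr, hr']
      linear_combination (-(p * p' * (u1 * u2))) * hs + (p * p' * (u1 + u2)) * hm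





def negOne : SL2C := ⟨-1, by simp [Matrix.det_neg]⟩

lemma negOne_mem_center : negOne ∈ Subgroup.center SL2C := by
  refine Subgroup.mem_center_iff.mpr fun g => Subtype.ext ?_
  show (g * negOne : SL2C).1 = (negOne * g : SL2C).1
  rw [Matrix.SpecialLinearGroup.coe_mul, Matrix.SpecialLinearGroup.coe_mul]
  simp [negOne]

lemma center_val (z : SL2C) (hz : z ∈ Subgroup.center SL2C) :
    (z : Matrix (Fin 2) (Fin 2) ℂ) = 1 ∨ (z : Matrix (Fin 2) (Fin 2) ℂ) = -1 := by
  have hU := Subgroup.mem_center_iff.mp hz ⟨!![1,1;0,1], by simp⟩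
  have hL := Subgroup.mem_center_iff.mp hz ⟨!![1,0;1,1], by simp⟩
  have hU' : (!![(1:ℂ),1;0,1]) * z.1 = z.1 * !![(1:ℂ),1;0,1] := congrArg Subtype.val hU
  have hL' : (!![(1:ℂ),0;1,1]) * z.1 = z.1 * !![(1:ℂ),0;1,1] := congrArg Subtype.val hL
  have e1 := congrFun (congrFun hU' 0) 0
  have e2 := congrFun (congrFun hU' 0) 1
  have e3 := congrFun (congrFun hL' 0) 0
  have e4 := congrFun (congrFun hL' 1) 1
  simp [Matrix.mul_apply, Fin.sum_univ_two] at e1 e2 e3 e4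
  have hdet := z.2
  rw [Matrix.det_fin_two] at hdet
  have hd : z.1 1 1 = z.1 0 0 := by linear_combination e2
  have hsq : (z.1 0 0 - 1) * (z.1 0 0 + 1) = 0 := by
    linear_combination hdet - z.1 0 0 * e2 + z.1 1 0 * e3
  rcases mul_eq_zero.1 hsq with hh | hh
  · left
    have ha : z.1 0 0 = 1 := by linear_combination hh
    ext i j
    fin_cases i <;> fin_cases j <;>
      simp [ha, hd, e1, e3, Matrix.one_apply]
  · right
    have ha : z.1 0 0 = -1 := by linear_combination hh
    ext i j
    fin_cases i <;> fin_cases j <;>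
      simp [ha, hd, e1, e3]


lemma finorder_of_anticomm (A B : SL2C)
    (hkey : B.1 * A.1 = -(A.1 * B.1)) :
    IsOfFinOrder (QuotientGroup.mk A : PSL2C) := by
  have hBinv : (B⁻¹ : SL2C).1 * B.1 = 1 := by
    rw [← Matrix.SpecialLinearGroup.coe_mul, inv_mul_cancel, Matrix.SpecialLinearGroup.coe_one]
  have hBinv' : B.1 * (B⁻¹ : SL2C).1 = 1 := by
    rw [← Matrix.SpecialLinearGroup.coe_mul, mul_inv_cancel, Matrix.SpecialLinearGroup.coe_one]
  have htr : Matrix.trace A.1 = -Matrix.trace A.1 := by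
    conv_lhs => rw [← one_mul A.1, ← hBinv, mul_assoc, Matrix.trace_mul_comm]
    rw [hkey, neg_mul, Matrix.trace_neg, mul_assoc, hBinv', mul_one]
  have htr0 : A.1 0 0 + A.1 1 1 = 0 := by
    have h2 : Matrix.trace A.1 = 0 := by linear_combination htr / 2
    rw [Matrix.trace_fin_two] at h2
    exact h2
  have hdet := A.2
  rw [Matrix.det_fin_two] at hdet
  have hsq : A.1 * A.1 = -1 := by
    ext i j
    fin_cases i <;> fin_cases j <;>
      simp [Matrix.mul_apply, Fin.sum_univ_two] <;>
      first
        | linear_combination A.1 0 0 * htr0 - hdet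
        | linear_combination A.1 0 1 * htr0
        | linear_combination A.1 1 0 * htr0
        | linear_combination A.1 1 1 * htr0 - hdet
  have hAA : A * A = negOne := Subtype.ext (by
    rw [Matrix.SpecialLinearGroup.coe_mul, hsq]; rfl)
  have hx2 : (QuotientGroup.mk A : PSL2C) ^ 2 = 1 := by
    rw [pow_two, ← QuotientGroup.mk_mul, hAA, QuotientGroup.eq_one_iff]
    exact negOne_mem_center
  exact isOfFinOrder_iff_pow_eq_one.mpr ⟨2, by norm_num, hx2⟩

lemma nonscalar_s5 (A : SL2C) (h : ¬ IsOfFinOrder (QuotientGroup.mk A : PSL2C)) :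
    ¬(A.1 1 0 = 0 ∧ A.1 1 1 - A.1 0 0 = 0 ∧ A.1 0 1 = 0) := by
  rintro ⟨hc, hd, hb⟩
  have hdet := A.2
  rw [Matrix.det_fin_two] at hdet
  have hsq : (A.1 0 0 - 1) * (A.1 0 0 + 1) = 0 := by
    linear_combination hdet - A.1 0 0 * hd + A.1 0 1 * hc
  apply h
  have : (QuotientGroup.mk A : PSL2C) = 1 := by
    rw [QuotientGroup.eq_one_iff]
    rcases mul_eq_zero.1 hsq with hh | hh
    · have ha : A.1 0 0 = 1 := by linear_combination hh
      have : A = 1 := Subtype.ext (by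
        ext i j
        fin_cases i <;> fin_cases j <;> simp [ha, hb, hc, Matrix.one_apply] <;>
          linear_combination hd + ha)
      rw [this]; exact Subgroup.one_mem _
    · have ha : A.1 0 0 = -1 := by linear_combination hh
      have : A = negOne := Subtype.ext (by
        ext i j
        fin_cases i <;> fin_cases j <;> simp [negOne, ha, hb, hc] <;>
          linear_combination hd + ha)
      rw [this]; exact negOne_mem_center
  rw [this]; exact IsOfFinOrder.one

lemma comm_iff_minors (A B : SL2C) :
    A.1 * B.1 = B.1 * A.1 ↔
      (A.1 1 0 * (B.1 1 1 - B.1 0 0) = B.1 1 0 * (A.1 1 1 - A.1 0 0) ∧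
       A.1 1 0 * (-(B.1 0 1)) = B.1 1 0 * (-(A.1 0 1)) ∧
       (A.1 1 1 - A.1 0 0) * (-(B.1 0 1)) = (B.1 1 1 - B.1 0 0) * (-(A.1 0 1))) := by
  constructor
  · intro h
    have e00 := congrFun (congrFun h 0) 0
    have e01 := congrFun (congrFun h 0) 1
    have e10 := congrFun (congrFun h 1) 0
    simp [Matrix.mul_apply, Fin.sum_univ_two] at e00 e01 e10
    exact ⟨by linear_combination -e10, by linear_combination e00, by linear_combination e01⟩
  · rintro ⟨m1, m2, m3⟩
    ext i j
    fin_cases i <;> fin_cases j <;> simp [Matrix.mul_apply, Fin.sum_univ_two] <;>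
      first
        | linear_combination m2
        | linear_combination m3
        | linear_combination -m1
        | linear_combination -m2



/-- Two elements of `PSL(2,ℂ)` of infinite order commute if and only if matrix
representatives in `SL(2,ℂ)` have exactly the same eigenvectors (equivalently, the
corresponding isometries of `ℍ³` have the same axis or the same parabolic fixed
point at infinity). -/
theorem commute_iff_same_eigenvectors (x y : PSL2C)
    (hx : ¬ IsOfFinOrder x) (hy : ¬ IsOfFinOrder y)
    (A B : SL2C)
    (hA : (QuotientGroup.mk A : PSL2C) = x) (hB : (QuotientGroup.mk B : PSL2C) = y) :
    Commute x y ↔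
      ∀ v : Fin 2 → ℂ, v ≠ 0 → (IsEigenvectorSL2C A v ↔ IsEigenvectorSL2C B v) := by
  subst hA
  subst hB
  have hnsA := nonscalar_s5 A hx
  have hnsB := nonscalar_s5 B hy
  have hA3 : ¬(A.1 1 0 = 0 ∧ (A.1 1 1 - A.1 0 0) = 0 ∧ -(A.1 0 1) = 0) := by
    rintro ⟨h1, h2, h3⟩
    exact hnsA ⟨h1, h2, neg_eq_zero.1 h3⟩
  have hB3 : ¬(B.1 1 0 = 0 ∧ (B.1 1 1 - B.1 0 0) = 0 ∧ -(B.1 0 1) = 0) := by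
    rintro ⟨h1, h2, h3⟩
    exact hnsB ⟨h1, h2, neg_eq_zero.1 h3⟩
  constructor
  · intro hcomm
    have hq : (QuotientGroup.mk (A * B) : PSL2C) = QuotientGroup.mk (B * A) := by
      rw [QuotientGroup.mk_mul, QuotientGroup.mk_mul]
      exact hcomm
    have hz := QuotientGroup.eq.mp hq
    have hval : (A.1 * B.1) * ((A * B)⁻¹ * (B * A) : SL2C).1 = B.1 * A.1 := by
      rw [← Matrix.SpecialLinearGroup.coe_mul, ← Matrix.SpecialLinearGroup.coe_mul,
        ← Matrix.SpecialLinearGroup.coe_mul, ← mul_assoc, mul_inv_cancel, one_mul]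
    rcases center_val _ hz with h1 | h1
    · have hmat : A.1 * B.1 = B.1 * A.1 := by
        rw [h1, mul_one] at hval
        exact hval
      obtain ⟨m1, m2, m3⟩ := (comm_iff_minors A B).mp hmat
      obtain ⟨β, hβ, hp', hq', hr'⟩ :=
        exists_ratio (A.1 1 0) (A.1 1 1 - A.1 0 0) (-(A.1 0 1))
          (B.1 1 0) (B.1 1 1 - B.1 0 0) (-(B.1 0 1)) hB3 m1 m2 m3 hA3
      have hrel : ∀ v0 v1 : ℂ,
          B.1 1 0 * v0 ^ 2 + (B.1 1 1 - B.1 0 0) * (v0 * v1) - B.1 0 1 * v1 ^ 2 =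
            β * (A.1 1 0 * v0 ^ 2 + (A.1 1 1 - A.1 0 0) * (v0 * v1) - A.1 0 1 * v1 ^ 2) := by
        intro v0 v1
        linear_combination v0 ^ 2 * hp' + (v0 * v1) * hq' + v1 ^ 2 * hr'
      intro v hv
      rw [eig_iff A v hv, eig_iff B v hv]
      constructor
      · intro h0
        rw [hrel (v 0) (v 1), h0, mul_zero]
      · intro h0
        rw [hrel (v 0) (v 1)] at h0
        exact (mul_eq_zero.1 h0).resolve_left hβ
    · exfalso
      apply hx
      apply finorder_of_anticomm A B
      rw [h1] at hval
      rw [← hval, mul_neg_one]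
  · intro h
    have hsz : ∀ t u : ℂ, (t ≠ 0 ∨ u ≠ 0) →
        (A.1 1 0 * t ^ 2 + (A.1 1 1 - A.1 0 0) * (t * u) + (-(A.1 0 1)) * u ^ 2 = 0 ↔
          B.1 1 0 * t ^ 2 + (B.1 1 1 - B.1 0 0) * (t * u) + (-(B.1 0 1)) * u ^ 2 = 0) := by
      intro t u htu
      have hv : (![t, u] : Fin 2 → ℂ) ≠ 0 := by
        intro h0
        rcases htu with ht | hu
        · exact ht (by simpa using congrFun h0 0)
        · exact hu (by simpa using congrFun h0 1)
      have hiff := h ![t, u] hv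
      rw [eig_iff A _ hv, eig_iff B _ hv] at hiff
      simp only [Matrix.cons_val_zero, Matrix.cons_val_one, Matrix.head_cons] at hiff
      constructor
      · intro h0
        linear_combination hiff.mp (by linear_combination h0)
      · intro h0
        linear_combination hiff.mpr (by linear_combination h0)
    obtain ⟨m1, m2, m3⟩ :=
      minors_of_same_zeros (A.1 1 0) (A.1 1 1 - A.1 0 0) (-(A.1 0 1))
        (B.1 1 0) (B.1 1 1 - B.1 0 0) (-(B.1 0 1)) hA3 hsz
    have hmat := (comm_iff_minors A B).mpr ⟨m1, m2, m3⟩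
    have hAB : A * B = B * A := Subtype.ext (by
      rw [Matrix.SpecialLinearGroup.coe_mul, Matrix.SpecialLinearGroup.coe_mul]
      exact hmat)
    show QuotientGroup.mk A * QuotientGroup.mk B = QuotientGroup.mk B * QuotientGroup.mk A
    rw [← QuotientGroup.mk_mul, ← QuotientGroup.mk_mul, hAB]
end

section
/- Let G be a discrete torsion-free subgroup of PSL(2,ℂ) such that every element of G is represented by an upper-triangular matrix in SL(2,ℂ) (i.e., a matrix whose lower-left entry is 0; equivalently, every element of G fixes the point ∞ of the sphere at infinity). Then G is abelian. -/
open Filter Topology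

/-- The parabolic (upper unitriangular) element of `SL(2,ℂ)` with parameter `c`. -/
def pmat (c : ℂ) : SL2C := ⟨!![1, c; 0, 1], by simp [Matrix.det_fin_two_of]⟩

lemma pmat_mul (c d : ℂ) : pmat c * pmat d = pmat (c + d) := by
  ext i j
  rw [Matrix.SpecialLinearGroup.coe_mul]
  fin_cases i <;> fin_cases j <;> simp [pmat, Matrix.mul_fin_two] <;> ring

lemma pmat_zero : pmat 0 = 1 := by
  ext i j
  fin_cases i <;> fin_cases j <;> simp [pmat, Matrix.one_fin_two]

/-- A lower unitriangular test element. -/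
def Emat : SL2C := ⟨!![1, 0; 1, 1], by simp [Matrix.det_fin_two_of]⟩

lemma mk_pmat_eq_one {c : ℂ} : (QuotientGroup.mk (pmat c) : PSL2C) = 1 ↔ c = 0 := by
  rw [QuotientGroup.eq_one_iff]
  constructor
  · intro h
    have h2 := Subgroup.mem_center_iff.mp h Emat
    have h3 := congrArg (fun M : SL2C => (M : Matrix (Fin 2) (Fin 2) ℂ) 0 0) h2
    rw [Matrix.SpecialLinearGroup.coe_mul, Matrix.SpecialLinearGroup.coe_mul] at h3
    simp [pmat, Emat, Matrix.mul_fin_two] at h3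
    exact h3
  · rintro rfl
    rw [pmat_zero]; exact Subgroup.one_mem _

lemma exists_nhds (G : Subgroup PSL2C) (hdisc : DiscreteTopology G) :
    ∃ U : Set PSL2C, IsOpen U ∧ (1 : PSL2C) ∈ U ∧ ∀ x ∈ G, x ∈ U → x = 1 := by
  have h1 : IsOpen ({1} : Set G) := isOpen_discrete _
  rw [isOpen_induced_iff] at h1
  obtain ⟨U, hU, hpre⟩ := h1
  refine ⟨U, hU, ?_, ?_⟩
  · have : (1 : G) ∈ (Subtype.val ⁻¹' U : Set G) := by rw [hpre]; rfl
    exact this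
  · intro x hx hxU
    have : (⟨x, hx⟩ : G) ∈ (Subtype.val ⁻¹' U : Set G) := hxU
    rw [hpre] at this
    exact congrArg Subtype.val this

lemma tendsto_mk_pmat {c : ℕ → ℂ} (hc : Tendsto c atTop (𝓝 0)) :
    Tendsto (fun n => (QuotientGroup.mk (pmat (c n)) : PSL2C)) atTop (𝓝 (1 : PSL2C)) := by
  have hcont : Continuous (QuotientGroup.mk : SL2C → PSL2C) := continuous_quotient_mk'
  have h1 : Tendsto (fun n => pmat (c n)) atTop (𝓝 (1 : SL2C)) := by
    rw [nhds_induced, Filter.tendsto_comap_iff]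
    have : Tendsto (fun n => ((pmat (c n) : Matrix (Fin 2) (Fin 2) ℂ)))
        atTop (𝓝 (1 : Matrix (Fin 2) (Fin 2) ℂ)) := by
      apply tendsto_pi_nhds.mpr
      intro i
      apply tendsto_pi_nhds.mpr
      intro j
      fin_cases i <;> fin_cases j <;>
        simp [pmat, Matrix.one_apply] <;>
        first
          | exact tendsto_const_nhds
          | exact hc
    exact this
  have h2 := (hcont.tendsto (1 : SL2C)).comp h1
  exact h2

/-- There are no sequences of nontrivial parabolics in a discrete `G` tending to `1`. -/
lemma no_small_parabolics (G : Subgroup PSL2C) (hdisc : DiscreteTopology G)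
    (c : ℕ → ℂ) (h0 : ∀ n, c n ≠ 0)
    (hG : ∀ n, (QuotientGroup.mk (pmat (c n)) : PSL2C) ∈ G)
    (hlim : Tendsto c atTop (𝓝 0)) : False := by
  obtain ⟨U, hUopen, hU1, hUG⟩ := exists_nhds G hdisc
  have h2 := tendsto_mk_pmat hlim
  have h3 : ∀ᶠ n in atTop, (QuotientGroup.mk (pmat (c n)) : PSL2C) ∈ U :=
    h2 (hUopen.mem_nhds hU1)
  obtain ⟨n, hn⟩ := h3.exists
  have h4 := hUG _ (hG n) hn
  exact h0 n (mk_pmat_eq_one.mp h4)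

lemma det_rel (A : SL2C) (h10 : (A : Matrix (Fin 2) (Fin 2) ℂ) 1 0 = 0) :
    (A : Matrix (Fin 2) (Fin 2) ℂ) 0 0 * (A : Matrix (Fin 2) (Fin 2) ℂ) 1 1 = 1 := by
  have h := A.2
  rw [Matrix.det_fin_two, h10] at h
  linear_combination h

lemma eta_tri (A : SL2C) (h10 : (A : Matrix (Fin 2) (Fin 2) ℂ) 1 0 = 0) :
    (A : Matrix (Fin 2) (Fin 2) ℂ) =
      !![(A : Matrix (Fin 2) (Fin 2) ℂ) 0 0, (A : Matrix (Fin 2) (Fin 2) ℂ) 0 1;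
         0, (A : Matrix (Fin 2) (Fin 2) ℂ) 1 1] := by
  rw [← h10]
  exact Matrix.etaExpand_eq _ |>.symm

lemma conj_pmat (A : SL2C) (h10 : (A : Matrix (Fin 2) (Fin 2) ℂ) 1 0 = 0) (c : ℂ) :
    A * pmat c * A⁻¹ = pmat ((A : Matrix (Fin 2) (Fin 2) ℂ) 0 0 ^ 2 * c) := by
  have hdet := det_rel A h10
  have hA := eta_tri A h10
  ext i j
  rw [Matrix.SpecialLinearGroup.coe_mul, Matrix.SpecialLinearGroup.coe_mul,
    Matrix.SpecialLinearGroup.coe_inv, Matrix.adjugate_fin_two, hA]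
  fin_cases i <;> fin_cases j <;>
    simp [pmat, Matrix.mul_fin_two] <;>
    first
      | ring1
      | linear_combination hdet
      | linear_combination (1 - (A : Matrix (Fin 2) (Fin 2) ℂ) 0 0 ^ 2 * c) * hdet
      | linear_combination ((A : Matrix (Fin 2) (Fin 2) ℂ) 0 0 ^ 2 * c) * hdet

lemma commutator_eq_pmat (A B : SL2C)
    (hA10 : (A : Matrix (Fin 2) (Fin 2) ℂ) 1 0 = 0)
    (hB10 : (B : Matrix (Fin 2) (Fin 2) ℂ) 1 0 = 0) :
    A * B * (B * A)⁻¹ =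
      pmat (((A : Matrix (Fin 2) (Fin 2) ℂ) 0 0 ^ 2 - 1) *
              ((B : Matrix (Fin 2) (Fin 2) ℂ) 0 0 * (B : Matrix (Fin 2) (Fin 2) ℂ) 0 1) +
            (A : Matrix (Fin 2) (Fin 2) ℂ) 0 0 * (A : Matrix (Fin 2) (Fin 2) ℂ) 0 1 *
              (1 - (B : Matrix (Fin 2) (Fin 2) ℂ) 0 0 ^ 2)) := by
  have hdA := det_rel A hA10
  have hdB := det_rel B hB10
  have hAe := eta_tri A hA10
  have hBe := eta_tri B hB10
  ext i j
  rw [Matrix.SpecialLinearGroup.coe_mul, Matrix.SpecialLinearGroup.coe_mul,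
    Matrix.SpecialLinearGroup.coe_inv, Matrix.SpecialLinearGroup.coe_mul, hAe, hBe,
    Matrix.mul_fin_two, Matrix.mul_fin_two, Matrix.adjugate_fin_two]
  fin_cases i <;> fin_cases j <;>
    simp [pmat, Matrix.mul_fin_two] <;>
    first
      | ring1
      | linear_combination hdA
      | linear_combination hdB
      | linear_combination ((B : Matrix (Fin 2) (Fin 2) ℂ) 0 0 * (B : Matrix (Fin 2) (Fin 2) ℂ) 1 1) * hdA + hdB
      | linear_combination (-((B : Matrix (Fin 2) (Fin 2) ℂ) 0 0 * (B : Matrix (Fin 2) (Fin 2) ℂ) 0 1)) * hdA + ((A : Matrix (Fin 2) (Fin 2) ℂ) 0 0 * (A : Matrix (Fin 2) (Fin 2) ℂ) 0 1) * hdB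

lemma pow_tri (A : SL2C) (h10 : (A : Matrix (Fin 2) (Fin 2) ℂ) 1 0 = 0) (n : ℕ) :
    ∃ s : ℂ, ((A : Matrix (Fin 2) (Fin 2) ℂ)) ^ n =
      !![(A : Matrix (Fin 2) (Fin 2) ℂ) 0 0 ^ n, s; 0, (A : Matrix (Fin 2) (Fin 2) ℂ) 1 1 ^ n] ∧
      ((A : Matrix (Fin 2) (Fin 2) ℂ) 0 0 - (A : Matrix (Fin 2) (Fin 2) ℂ) 1 1) * s =
        (A : Matrix (Fin 2) (Fin 2) ℂ) 0 1 *
          ((A : Matrix (Fin 2) (Fin 2) ℂ) 0 0 ^ n - (A : Matrix (Fin 2) (Fin 2) ℂ) 1 1 ^ n) := by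
  set a := (A : Matrix (Fin 2) (Fin 2) ℂ) 0 0
  set b := (A : Matrix (Fin 2) (Fin 2) ℂ) 0 1
  set d := (A : Matrix (Fin 2) (Fin 2) ℂ) 1 1
  induction n with
  | zero => exact ⟨0, by simp [Matrix.one_fin_two], by ring⟩
  | succ n ih =>
    obtain ⟨s, hs, hrel⟩ := ih
    refine ⟨a ^ n * b + s * d, ?_, ?_⟩
    · rw [pow_succ, hs, eta_tri A h10, Matrix.mul_fin_two]
      congr 1; ext i j; fin_cases i <;> fin_cases j <;> simp [a, b, d] <;> ring
    · linear_combination d * hrel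

lemma scalar_mem_center (M : SL2C) (x : ℂ)
    (hM : (M : Matrix (Fin 2) (Fin 2) ℂ) = !![x, 0; 0, x]) : M ∈ Subgroup.center SL2C := by
  rw [Subgroup.mem_center_iff]
  intro g
  ext i j
  rw [Matrix.SpecialLinearGroup.coe_mul, Matrix.SpecialLinearGroup.coe_mul, hM,
    Matrix.eta_fin_two (g : Matrix (Fin 2) (Fin 2) ℂ), Matrix.mul_fin_two, Matrix.mul_fin_two]
  fin_cases i <;> fin_cases j <;> simp <;> ring

lemma mk_ne_one_of_sq_ne_one (A : SL2C) (h10 : (A : Matrix (Fin 2) (Fin 2) ℂ) 1 0 = 0)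
    (ha : (A : Matrix (Fin 2) (Fin 2) ℂ) 0 0 ^ 2 ≠ 1) :
    (QuotientGroup.mk A : PSL2C) ≠ 1 := by
  rw [Ne, QuotientGroup.eq_one_iff]
  intro h
  have h2 := Subgroup.mem_center_iff.mp h Emat
  have h3 : ((Emat * A : SL2C) : Matrix (Fin 2) (Fin 2) ℂ) 1 0 =
      ((A * Emat : SL2C) : Matrix (Fin 2) (Fin 2) ℂ) 1 0 := by rw [h2]
  rw [Matrix.SpecialLinearGroup.coe_mul, Matrix.SpecialLinearGroup.coe_mul,
    eta_tri A h10] at h3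
  simp [Emat, Matrix.mul_fin_two] at h3
  have hdet := det_rel A h10
  apply ha
  first
    | linear_combination (A : Matrix (Fin 2) (Fin 2) ℂ) 0 0 * h3 + hdet
    | linear_combination (-((A : Matrix (Fin 2) (Fin 2) ℂ) 0 0)) * h3 + hdet

lemma mk_pow_eq_one (A : SL2C) (h10 : (A : Matrix (Fin 2) (Fin 2) ℂ) 1 0 = 0)
    (ha : (A : Matrix (Fin 2) (Fin 2) ℂ) 0 0 ^ 2 ≠ 1) (n : ℕ)
    (hn : (A : Matrix (Fin 2) (Fin 2) ℂ) 0 0 ^ (2 * n) = 1) :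
    (QuotientGroup.mk A : PSL2C) ^ n = 1 := by
  set a := (A : Matrix (Fin 2) (Fin 2) ℂ) 0 0 with ha_def
  set d := (A : Matrix (Fin 2) (Fin 2) ℂ) 1 1 with hd_def
  have hdet := det_rel A h10
  obtain ⟨s, hs, hrel⟩ := pow_tri A h10 n
  have had : a ≠ d := by
    intro h
    apply ha
    linear_combination a * h + hdet
  have hdn : d ^ n = a ^ n := by
    have h1 : a ^ n * a ^ n = 1 := by
      rw [← pow_add, ← two_mul]
      exact hn
    have h2 : a ^ n * d ^ n = 1 := by rw [← mul_pow, hdet, one_pow]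
    have han : a ^ n ≠ 0 := by
      intro h; rw [h, zero_mul] at h1; exact zero_ne_one h1
    exact mul_left_cancel₀ han (h2.trans h1.symm)
  have hs0 : s = 0 := by
    have := hrel
    rw [hdn] at this
    rw [sub_self, mul_zero, mul_eq_zero] at this
    rcases this with h | h
    · exact absurd (sub_eq_zero.mp h) had
    · exact h
  have hpow : ((A ^ n : SL2C) : Matrix (Fin 2) (Fin 2) ℂ) = !![a ^ n, 0; 0, a ^ n] := by
    rw [Matrix.SpecialLinearGroup.coe_pow, hs, hs0, hdn]
  have hmem : (A ^ n : SL2C) ∈ Subgroup.center SL2C := scalar_mem_center _ _ hpow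
  have : (QuotientGroup.mk (A ^ n) : PSL2C) = 1 := (QuotientGroup.eq_one_iff _).mpr hmem
  rw [← this]
  rfl

lemma exists_pow_near_one {l : ℂ} (hnorm : ‖l‖ = 1) :
    ∃ m : ℕ → ℕ, (∀ k, 1 ≤ m k) ∧ Tendsto (fun k => l ^ m k) atTop (𝓝 1) := by
  have hl0 : l ≠ 0 := by
    intro h; rw [h, norm_zero] at hnorm; norm_num at hnorm
  have hb : Bornology.IsBounded (Metric.sphere (0 : ℂ) 1) := Metric.isBounded_sphere
  have hmem : ∀ n : ℕ, l ^ n ∈ Metric.sphere (0 : ℂ) 1 := by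
    intro n
    simp [Metric.mem_sphere, dist_eq_norm, norm_pow, hnorm]
  obtain ⟨b, hbmem, φ, hφ, hlim⟩ := tendsto_subseq_of_bounded hb hmem
  have hbnorm : ‖b‖ = 1 := by
    have : b ∈ Metric.sphere (0 : ℂ) 1 := by
      rwa [IsClosed.closure_eq Metric.isClosed_sphere] at hbmem
    simpa [dist_eq_norm] using this
  have hb0 : b ≠ 0 := by
    intro h; rw [h, norm_zero] at hbnorm; norm_num at hbnorm
  refine ⟨fun k => φ (k + 1) - φ k, fun k => ?_, ?_⟩
  · exact Nat.sub_pos_of_lt (hφ (Nat.lt_succ_self k))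
  · have hdiv : Tendsto (fun k => l ^ φ (k + 1) / l ^ φ k) atTop (𝓝 1) := by
      have h1 : Tendsto (fun k => l ^ φ (k + 1)) atTop (𝓝 b) :=
        hlim.comp (tendsto_add_atTop_nat 1)
      have := Tendsto.div h1 hlim hb0
      rw [div_self hb0] at this; exact this
    have heq : ∀ k, l ^ (φ (k + 1) - φ k) = l ^ φ (k + 1) / l ^ φ k := by
      intro k
      rw [pow_sub₀ _ hl0 (le_of_lt (hφ (Nat.lt_succ_self k)))]
      rfl
    simpa only [heq] using hdiv

/-- Conjugating parabolics by powers of an upper triangular element of `G`. -/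
lemma conj_mem (G : Subgroup PSL2C) (A : SL2C)
    (hA10 : (A : Matrix (Fin 2) (Fin 2) ℂ) 1 0 = 0)
    (hAG : (QuotientGroup.mk A : PSL2C) ∈ G) (t : ℂ)
    (htG : (QuotientGroup.mk (pmat t) : PSL2C) ∈ G) (n : ℕ) :
    (QuotientGroup.mk (pmat (((A : Matrix (Fin 2) (Fin 2) ℂ) 0 0 ^ 2) ^ n * t)) : PSL2C) ∈ G := by
  induction n with
  | zero => simpa using htG
  | succ n ih =>
    have heq : pmat (((A : Matrix (Fin 2) (Fin 2) ℂ) 0 0 ^ 2) ^ (n + 1) * t) =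
        A * pmat (((A : Matrix (Fin 2) (Fin 2) ℂ) 0 0 ^ 2) ^ n * t) * A⁻¹ := by
      rw [conj_pmat A hA10]
      congr 1
      ring
    rw [heq, QuotientGroup.mk_mul, QuotientGroup.mk_mul, QuotientGroup.mk_inv]
    exact G.mul_mem (G.mul_mem hAG ih) (G.inv_mem hAG)

/-- The main auxiliary contradiction: a discrete torsion-free `G` cannot contain both a
nontrivial parabolic `pmat t` and an upper-triangular element whose diagonal squared is
not `1`. -/
lemma main_aux (G : Subgroup PSL2C) (hdisc : DiscreteTopology G)
    (htf : ∀ g ∈ G, g ≠ 1 → ¬ IsOfFinOrder g)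
    (t : ℂ) (ht : t ≠ 0) (htG : (QuotientGroup.mk (pmat t) : PSL2C) ∈ G)
    (A : SL2C) (hA10 : (A : Matrix (Fin 2) (Fin 2) ℂ) 1 0 = 0)
    (hAG : (QuotientGroup.mk A : PSL2C) ∈ G)
    (ha : (A : Matrix (Fin 2) (Fin 2) ℂ) 0 0 ^ 2 ≠ 1) : False := by
  set a := (A : Matrix (Fin 2) (Fin 2) ℂ) 0 0 with ha_def
  have hdet := det_rel A hA10
  have ha0 : a ≠ 0 := by
    intro h
    rw [ha_def] at h
    rw [h, zero_mul] at hdet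
    exact zero_ne_one hdet
  set l : ℂ := a ^ 2 with hl_def
  have hl0 : l ≠ 0 := pow_ne_zero _ ha0
  rcases lt_trichotomy ‖l‖ 1 with hlt | heq | hgt
  · -- ‖l‖ < 1 : conjugates of pmat t shrink to 1
    refine no_small_parabolics G hdisc (fun n => l ^ n * t) (fun n => ?_) (fun n => ?_) ?_
    · exact mul_ne_zero (pow_ne_zero _ hl0) ht
    · exact conj_mem G A hA10 hAG t htG n
    · have := (tendsto_pow_atTop_nhds_zero_of_norm_lt_one hlt).mul_const t
      simpa using this
  · -- ‖l‖ = 1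
    by_cases hroot : ∃ n : ℕ, 1 ≤ n ∧ l ^ n = 1
    · -- root of unity : A has finite order in PSL, contradicting torsion-freeness
      obtain ⟨n, hn1, hn⟩ := hroot
      have hpow : a ^ (2 * n) = 1 := by
        rw [pow_mul]
        exact hn
      have h1 : (QuotientGroup.mk A : PSL2C) ^ n = 1 := mk_pow_eq_one A hA10 ha n hpow
      have hne1 : (QuotientGroup.mk A : PSL2C) ≠ 1 := mk_ne_one_of_sq_ne_one A hA10 ha
      exact htf _ hAG hne1 (isOfFinOrder_iff_pow_eq_one.mpr ⟨n, by omega, h1⟩)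
    · -- irrational rotation : powers of l come back near 1
      push_neg at hroot
      obtain ⟨m, hm1, hmlim⟩ := exists_pow_near_one heq
      refine no_small_parabolics G hdisc (fun k => (l ^ m k - 1) * t) (fun k => ?_)
        (fun k => ?_) ?_
      · exact mul_ne_zero (sub_ne_zero.mpr (hroot (m k) (hm1 k))) ht
      · have h1 : (QuotientGroup.mk (pmat (l ^ m k * t)) : PSL2C) ∈ G :=
          conj_mem G A hA10 hAG t htG (m k)
        have h2 : (QuotientGroup.mk (pmat (-t)) : PSL2C) ∈ G := by
          have hmul : pmat (-t) * pmat t = 1 := by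
            rw [pmat_mul, neg_add_cancel, pmat_zero]
          rw [eq_inv_of_mul_eq_one_left hmul, QuotientGroup.mk_inv]
          exact G.inv_mem htG
        have h3 : pmat ((l ^ m k - 1) * t) = pmat (l ^ m k * t) * pmat (-t) := by
          rw [pmat_mul]
          congr 1
          ring
        rw [h3, QuotientGroup.mk_mul]
        exact G.mul_mem h1 h2
      · have := (hmlim.sub_const 1).mul_const t
        simpa using this
  · -- ‖l‖ > 1 : use A⁻¹ instead
    have hinv10 : ((A⁻¹ : SL2C) : Matrix (Fin 2) (Fin 2) ℂ) 1 0 = 0 := by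
      rw [Matrix.SpecialLinearGroup.coe_inv, Matrix.adjugate_fin_two]
      simp [hA10]
    have hinv00 : ((A⁻¹ : SL2C) : Matrix (Fin 2) (Fin 2) ℂ) 0 0 =
        (A : Matrix (Fin 2) (Fin 2) ℂ) 1 1 := by
      rw [Matrix.SpecialLinearGroup.coe_inv, Matrix.adjugate_fin_two]
      simp
    set d := (A : Matrix (Fin 2) (Fin 2) ℂ) 1 1 with hd_def
    have hd0 : d ≠ 0 := by
      intro h
      rw [h, mul_zero] at hdet
      exact zero_ne_one hdet
    set mu : ℂ := d ^ 2 with hmu_def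
    have hlmu : l * mu = 1 := by
      rw [hl_def, hmu_def, ← mul_pow, hdet, one_pow]
    have hmu_norm : ‖mu‖ < 1 := by
      have h1 : ‖l‖ * ‖mu‖ = 1 := by rw [← norm_mul, hlmu, norm_one]
      nlinarith [norm_nonneg mu, norm_nonneg l]
    refine no_small_parabolics G hdisc (fun n => mu ^ n * t) (fun n => ?_) (fun n => ?_) ?_
    · exact mul_ne_zero (pow_ne_zero _ (pow_ne_zero _ hd0)) ht
    · have := conj_mem G A⁻¹ hinv10 (by rw [QuotientGroup.mk_inv]; exact G.inv_mem hAG) t htG n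
      rwa [hinv00] at this
    · have := (tendsto_pow_atTop_nhds_zero_of_norm_lt_one hmu_norm).mul_const t
      simpa using this

/-- A discrete torsion-free subgroup of `PSL(2,ℂ)`, all of whose elements are
represented by upper-triangular matrices in `SL(2,ℂ)` (i.e. the group fixes the point
`∞` of the sphere at infinity), is abelian. -/
theorem discrete_torsionFree_upperTriangular_abelian (G : Subgroup PSL2C)
    (hdisc : DiscreteTopology G)
    (htf : ∀ g ∈ G, g ≠ 1 → ¬ IsOfFinOrder g)
    (htri : ∀ g ∈ G, ∃ A : SL2C,
      (QuotientGroup.mk A : PSL2C) = g ∧ (A : Matrix (Fin 2) (Fin 2) ℂ) 1 0 = 0) :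
    ∀ a ∈ G, ∀ b ∈ G, a * b = b * a := by
  intro a ha b hb
  by_contra hne
  obtain ⟨A, hAk, hA10⟩ := htri a ha
  obtain ⟨B, hBk, hB10⟩ := htri b hb
  set t : ℂ := ((A : Matrix (Fin 2) (Fin 2) ℂ) 0 0 ^ 2 - 1) *
      ((B : Matrix (Fin 2) (Fin 2) ℂ) 0 0 * (B : Matrix (Fin 2) (Fin 2) ℂ) 0 1) +
    (A : Matrix (Fin 2) (Fin 2) ℂ) 0 0 * (A : Matrix (Fin 2) (Fin 2) ℂ) 0 1 *
      (1 - (B : Matrix (Fin 2) (Fin 2) ℂ) 0 0 ^ 2) with ht_def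
  have hq : (QuotientGroup.mk (pmat t) : PSL2C) = a * b * (b * a)⁻¹ := by
    rw [← commutator_eq_pmat A B hA10 hB10, QuotientGroup.mk_mul, QuotientGroup.mk_inv,
      QuotientGroup.mk_mul, QuotientGroup.mk_mul, hAk, hBk]
  have hqG : (QuotientGroup.mk (pmat t) : PSL2C) ∈ G := by
    rw [hq]
    exact G.mul_mem (G.mul_mem ha hb) (G.inv_mem (G.mul_mem hb ha))
  have ht : t ≠ 0 := by
    intro h
    apply hne
    have : (QuotientGroup.mk (pmat t) : PSL2C) = 1 := mk_pmat_eq_one.mpr h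
    rw [hq] at this
    exact mul_inv_eq_one.mp this
  by_cases hA2 : (A : Matrix (Fin 2) (Fin 2) ℂ) 0 0 ^ 2 = 1
  · by_cases hB2 : (B : Matrix (Fin 2) (Fin 2) ℂ) 0 0 ^ 2 = 1
    · apply ht
      rw [ht_def, hA2, hB2]
      ring
    · exact main_aux G hdisc htf t ht hqG B hB10 (by rw [hBk]; exact hb) hB2
  · exact main_aux G hdisc htf t ht hqG A hA10 (by rw [hAk]; exact ha) hA2
end

section
/- Let a, b, c ∈ ℂ with |a| ≠ 1 and c ≠ 0, and consider the matrices A = [[a, b], [0, a⁻¹]] and P = [[1, c], [0, 1]] in SL(2,ℂ). Then the subgroup of SL(2,ℂ) generated by {A, P} is not a discrete subgroup of SL(2,ℂ). -/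
open Matrix

set_option maxHeartbeats 1000000

private lemma pow_form (z w : ℂ) (B : SL2C)
    (hB : (B : Matrix (Fin 2) (Fin 2) ℂ) = !![z, w; 0, z⁻¹]) (n : ℕ) :
    ∃ w', ((B ^ n : SL2C) : Matrix (Fin 2) (Fin 2) ℂ) = !![z ^ n, w'; 0, (z ^ n)⁻¹] := by
  induction n with
  | zero => exact ⟨0, by simp [Matrix.one_fin_two]⟩
  | succ n ih =>
    obtain ⟨w', hw'⟩ := ih
    refine ⟨z ^ n * w + w' * z⁻¹, ?_⟩
    rw [pow_succ, Matrix.SpecialLinearGroup.coe_mul, hw', hB, Matrix.mul_fin_two]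
    congr 1 <;> ring_nf <;> simp [pow_succ, mul_inv]

private lemma conj_form (z w c : ℂ) (hz : z ≠ 0) (B P : SL2C)
    (hB : (B : Matrix (Fin 2) (Fin 2) ℂ) = !![z, w; 0, z⁻¹])
    (hP : (P : Matrix (Fin 2) (Fin 2) ℂ) = !![1, c; 0, 1]) (n : ℕ) :
    ((B ^ n * P * (B ^ n)⁻¹ : SL2C) : Matrix (Fin 2) (Fin 2) ℂ)
      = !![1, z ^ n * z ^ n * c; 0, 1] := by
  obtain ⟨w', h⟩ := pow_form z w B hB n
  have hx : z ^ n ≠ 0 := pow_ne_zero _ hz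
  rw [Matrix.SpecialLinearGroup.coe_mul, Matrix.SpecialLinearGroup.coe_mul,
    Matrix.SpecialLinearGroup.coe_inv, h, hP, Matrix.adjugate_fin_two,
    Matrix.mul_fin_two, Matrix.mul_fin_two]
  simp only [Matrix.of_apply, Matrix.cons_val', Matrix.cons_val_zero, Matrix.cons_val_one,
    Matrix.empty_val', Matrix.cons_val_fin_one, Matrix.head_cons, mul_inv_cancel₀ hx]
  congr 1 <;> field_simp <;> simp [← mul_pow, mul_inv_cancel₀ hz, hz] <;> ring


set_option linter.unreachableTactic false in
set_option linter.unnecessarySeqFocus false in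
set_option linter.unusedTactic false in
/-- The subgroup of `SL(2,ℂ)` generated by a hyperbolic (loxodromic) element
`A = [[a, b], [0, a⁻¹]]` with `|a| ≠ 1` and a nontrivial parabolic element
`P = [[1, c], [0, 1]]`, `c ≠ 0`, sharing the fixed point `∞` at infinity, is not
discrete. -/
theorem hyperbolic_parabolic_common_fixed_point_not_discrete
    (a b c : ℂ) (ha : ‖a‖ ≠ 1) (hc : c ≠ 0)
    (A P : SL2C)
    (hA : (A : Matrix (Fin 2) (Fin 2) ℂ) = !![a, b; 0, a⁻¹])
    (hP : (P : Matrix (Fin 2) (Fin 2) ℂ) = !![1, c; 0, 1]) :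
    ¬ DiscreteTopology (Subgroup.closure ({A, P} : Set SL2C)) := by
  intro hD
  -- a ≠ 0
  have hdet := A.prop
  rw [hA, Matrix.det_fin_two_of] at hdet
  have ha0 : a ≠ 0 := by
    intro h; rw [h] at hdet; simp at hdet
  set H := Subgroup.closure ({A, P} : Set SL2C) with hH
  have hAH : A ∈ H := Subgroup.subset_closure (by simp)
  have hPH : P ∈ H := Subgroup.subset_closure (by simp)
  -- choose B, z with |z| < 1
  obtain ⟨B, z, w, hBH, hz0, hzlt, hB⟩ :
      ∃ (B : SL2C) (z w : ℂ), B ∈ H ∧ z ≠ 0 ∧ ‖z‖ < 1 ∧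
        (B : Matrix (Fin 2) (Fin 2) ℂ) = !![z, w; 0, z⁻¹] := by
    rcases lt_or_gt_of_ne ha with h | h
    · exact ⟨A, a, b, hAH, ha0, h, hA⟩
    · refine ⟨A⁻¹, a⁻¹, -b, inv_mem hAH, inv_ne_zero ha0, ?_, ?_⟩
      · rw [norm_inv]; exact inv_lt_one_of_one_lt₀ h
      · rw [Matrix.SpecialLinearGroup.coe_inv, hA, Matrix.adjugate_fin_two]
        simp [inv_inv]
  have hQmem : ∀ n : ℕ, B ^ n * P * (B ^ n)⁻¹ ∈ H := fun n =>
    mul_mem (mul_mem (pow_mem hBH n) hPH) (inv_mem (pow_mem hBH n))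
  set Q : ℕ → H := fun n => ⟨B ^ n * P * (B ^ n)⁻¹, hQmem n⟩ with hQ
  -- the matrix map is inducing
  have i1 : Topology.IsInducing (fun A : SL2C => (A : Matrix (Fin 2) (Fin 2) ℂ)) := ⟨rfl⟩
  have i2 : Topology.IsInducing (Subtype.val : H → SL2C) := Topology.IsInducing.subtypeVal
  have i := i1.comp i2
  -- matrices converge to 1
  have key : Filter.Tendsto
      (fun n : ℕ => (((Q n : SL2C)) : Matrix (Fin 2) (Fin 2) ℂ)) Filter.atTop
      (nhds (((1 : H) : SL2C) : Matrix (Fin 2) (Fin 2) ℂ)) := by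
    have hform : ∀ n : ℕ, (((Q n : SL2C)) : Matrix (Fin 2) (Fin 2) ℂ)
        = (1 : Matrix (Fin 2) (Fin 2) ℂ) + ((z * z) ^ n * c) • !![(0:ℂ), 1; 0, 0] := by
      intro n
      rw [hQ]
      simp only
      rw [conj_form z w c hz0 B P hB hP n]
      ext i j
      fin_cases i <;> fin_cases j <;>
        simp [Matrix.one_fin_two, mul_pow] <;> ring
    have hcoef : Filter.Tendsto (fun n : ℕ => (z * z) ^ n * c) Filter.atTop (nhds 0) := by
      have : Filter.Tendsto (fun n : ℕ => (z * z) ^ n) Filter.atTop (nhds 0) := by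
        apply tendsto_pow_atTop_nhds_zero_of_norm_lt_one
        rw [norm_mul]
        exact mul_lt_one_of_nonneg_of_lt_one_left (norm_nonneg _) hzlt hzlt.le
      simpa using this.mul_const c
    have key2 : Filter.Tendsto
        (fun n : ℕ => (1 : Matrix (Fin 2) (Fin 2) ℂ)
          + ((z * z) ^ n * c) • !![(0:ℂ), 1; 0, 0]) Filter.atTop
        (nhds ((1 : Matrix (Fin 2) (Fin 2) ℂ) + (0 : ℂ) • !![(0:ℂ), 1; 0, 0])) :=
      Filter.Tendsto.add tendsto_const_nhds (hcoef.smul_const _)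
    have h1 : (((1 : H) : SL2C) : Matrix (Fin 2) (Fin 2) ℂ)
        = (1 : Matrix (Fin 2) (Fin 2) ℂ) + (0 : ℂ) • !![(0:ℂ), 1; 0, 0] := by simp
    rw [h1]
    exact key2.congr (fun n => (hform n).symm)
  -- so Q tends to 1 in H
  have hT : Filter.Tendsto Q Filter.atTop (nhds (1 : H)) := by
    rw [i.tendsto_nhds_iff]
    exact key
  rw [nhds_discrete, Filter.tendsto_pure] at hT
  obtain ⟨n, hn⟩ := hT.exists
  -- contradiction
  have : ((B ^ n * P * (B ^ n)⁻¹ : SL2C) : Matrix (Fin 2) (Fin 2) ℂ) 0 1 = 0 := by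
    have : (Q n : SL2C) = 1 := congrArg Subtype.val hn
    rw [hQ] at this
    simp only at this
    rw [this]
    simp [Matrix.one_fin_two]
  rw [conj_form z w c hz0 B P hB hP n] at this
  simp at this
  rcases this with h | h
  · exact hz0 h.1
  · exact hc h
end

section
/- For every point z₀ of the upper half-plane ℍ and every real number R ≥ 0, the set {g ∈ SL(2,ℝ) : dist(g • z₀, z₀) ≤ R} is a compact subset of SL(2,ℝ), where dist denotes the hyperbolic distance on ℍ. -/
open UpperHalfPlane

/-- The topology on `SL(2,ℝ)` induced from the matrix topology. -/
instance : TopologicalSpace (Matrix.SpecialLinearGroup (Fin 2) ℝ) :=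
  TopologicalSpace.induced (fun A => (A : Matrix (Fin 2) (Fin 2) ℝ)) inferInstance

open Matrix Complex Real Topology

theorem SL2_denom_ne_zero (z₀ : UpperHalfPlane) (g : Matrix.SpecialLinearGroup (Fin 2) ℝ) :
    ((g : Matrix (Fin 2) (Fin 2) ℝ) 1 0 : ℂ) * (z₀ : ℂ) + (g : Matrix (Fin 2) (Fin 2) ℝ) 1 1 ≠ 0 := by
  set c : ℝ := (g : Matrix (Fin 2) (Fin 2) ℝ) 1 0 with hc
  set d : ℝ := (g : Matrix (Fin 2) (Fin 2) ℝ) 1 1 with hd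
  have hdet : (g : Matrix (Fin 2) (Fin 2) ℝ) 0 0 * d - (g : Matrix (Fin 2) (Fin 2) ℝ) 0 1 * c = 1 := by
    have := g.2
    rw [Matrix.det_fin_two] at this
    linarith
  intro h
  have him : c * z₀.im = 0 := by
    have := congrArg Complex.im h
    simpa using this
  have hc0 : c = 0 := by
    rcases mul_eq_zero.1 him with h' | h'
    · exact h'
    · exact absurd h' z₀.im_pos.ne'
  have hre : c * (z₀ : ℂ).re + d = 0 := by
    have := congrArg Complex.re h
    simpa using this
  have hd0 : d = 0 := by simpa [hc0] using hre
  rw [hc0, hd0] at hdet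
  simp at hdet

set_option maxHeartbeats 1600000 in
/-- All four entries of `g ∈ SL(2,ℝ)` with `dist (g • z₀) z₀ ≤ R` are bounded. -/
theorem SL2_entry_bound (z₀ : UpperHalfPlane) (R : ℝ) (hR : 0 ≤ R)
    (g : Matrix.SpecialLinearGroup (Fin 2) ℝ) (hg : dist (g • z₀) z₀ ≤ R) (i j : Fin 2) :
    |(g : Matrix (Fin 2) (Fin 2) ℝ) i j| ≤
      (1 + ‖(z₀ : ℂ)‖ + z₀.im * Real.exp R) * Real.exp (R / 2) *
        (1 + z₀.im + ‖(z₀ : ℂ)‖) / z₀.im := by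
  set a : ℝ := g 0 0 with ha
  set b : ℝ := g 0 1 with hb
  set c : ℝ := g 1 0 with hc
  set d : ℝ := g 1 1 with hd
  set y : ℝ := z₀.im with hy
  have hy0 : 0 < y := z₀.im_pos
  set z : ℂ := (z₀ : ℂ) with hz
  have hzim : z.im = y := rfl
  have hdet : a * d - b * c = 1 := by
    have := g.2
    rw [Matrix.det_fin_two] at this
    linarith [this]
  set den : ℂ := (c : ℂ) * z + d with hden
  set num : ℂ := (a : ℂ) * z + b with hnum
  have hdenim : den.im = c * y := by simp [hden, hz, hzim, hy]
  have hnumim : num.im = a * y := by simp [hnum, hz, hzim, hy]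
  have hden0 : den ≠ 0 := by
    intro h
    have him : c * y = 0 := by rw [← hdenim, h]; simp
    have hc0 : c = 0 := by
      rcases mul_eq_zero.1 him with h' | h'
      · exact h'
      · exact absurd h' hy0.ne'
    have hre : c * z.re + d = 0 := by
      have := congrArg Complex.re h
      simpa [hden] using this
    have hd0 : d = 0 := by simpa [hc0] using hre
    rw [hc0, hd0] at hdet; simp at hdet
  have hsmul : ((g • z₀ : ℍ) : ℂ) = num / den := by
    rw [UpperHalfPlane.specialLinearGroup_apply]
    simp [UpperHalfPlane.coe_mk, hnum, hden, ← ha, ← hb, ← hc, ← hd, hz]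
  -- imaginary part of g•z₀
  have hgim : (g • z₀).im = y / Complex.normSq den := by
    have h1 : (g • z₀).im = (num / den).im := by
      rw [← UpperHalfPlane.coe_im, hsmul]
    rw [h1, Complex.div_im]
    have hre_num : num.re = a * z.re + b := by simp [hnum, hz]
    have hre_den : den.re = c * z.re + d := by simp [hden, hz]
    rw [hre_num, hre_den, hdenim, hnumim]
    have h2 : Complex.normSq den ≠ 0 := by simpa using Complex.normSq_pos.2 hden0 |>.ne'
    field_simp
    ring_nf
    nlinarith [Complex.normSq_pos.2 hden0]
  -- normSq den ≤ exp R
  have hexp1 : (1:ℝ) ≤ Real.exp R := Real.one_le_exp hR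
  have hDle : Complex.normSq den ≤ Real.exp R := by
    have h1 : y ≤ (g • z₀).im * Real.exp R := by
      have h2 := UpperHalfPlane.im_le_im_mul_exp_dist z₀ (g • z₀)
      rw [dist_comm] at h2
      calc y ≤ (g • z₀).im * Real.exp (dist (g • z₀) z₀) := h2
        _ ≤ (g • z₀).im * Real.exp R :=
            mul_le_mul_of_nonneg_left (Real.exp_le_exp.2 hg) (g • z₀).im_pos.le
    rw [hgim] at h1
    have hns : 0 < Complex.normSq den := Complex.normSq_pos.2 hden0
    rw [div_mul_eq_mul_div, le_div_iff₀ hns] at h1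
    nlinarith
  set E : ℝ := Real.exp (R / 2) with hE
  have hE0 : 0 < E := Real.exp_pos _
  have habsden : ‖den‖ ≤ E := by
    have h1 : ‖den‖ ^ 2 ≤ E ^ 2 := by
      rw [Complex.sq_norm]
      have : E ^ 2 = Real.exp R := by
        rw [hE, sq, ← Real.exp_add]; ring_nf
      rw [this]; exact hDle
    nlinarith [norm_nonneg den]
  -- bound on g • z₀
  set M : ℝ := ‖z‖ + y * (Real.exp R - 1) with hM
  have habsz : 0 ≤ ‖z‖ := norm_nonneg z
  have hgz : ‖((g • z₀ : ℍ) : ℂ)‖ ≤ M := by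
    have h1 := UpperHalfPlane.dist_coe_le (g • z₀) z₀
    have h2 : dist (((g • z₀) : ℍ) : ℂ) (z₀ : ℂ) ≤ y * (Real.exp R - 1) := by
      refine h1.trans ?_
      have : Real.exp (dist (g • z₀) z₀) ≤ Real.exp R := Real.exp_le_exp.2 hg
      nlinarith
    calc ‖((g • z₀ : ℍ) : ℂ)‖
        ≤ ‖z‖ + ‖(((g • z₀ : ℍ) : ℂ) - z)‖ := by
          have := norm_add_le z (((g • z₀ : ℍ) : ℂ) - z); simpa using this
      _ ≤ M := by
          rw [hM]
          have : ‖(((g • z₀ : ℍ) : ℂ) - z)‖ = dist (((g • z₀) : ℍ) : ℂ) (z₀ : ℂ) := by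
            rw [Complex.dist_eq, hz]
          linarith [this ▸ h2]
  have hnum_eq : num = ((g • z₀ : ℍ) : ℂ) * den := by
    rw [hsmul, div_mul_cancel₀ _ hden0]
  have hM0 : 0 ≤ M := by
    have : 0 ≤ y * (Real.exp R - 1) := mul_nonneg hy0.le (by linarith)
    rw [hM]; linarith
  have habsnum : ‖num‖ ≤ M * E := by
    rw [hnum_eq, norm_mul]
    exact mul_le_mul hgz habsden (norm_nonneg _) hM0
  -- entry bounds
  have hcb : |c| * y ≤ E := by
    have : |den.im| ≤ ‖den‖ := Complex.abs_im_le_norm den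
    rw [hdenim, abs_mul, abs_of_pos hy0] at this
    linarith
  have hab : |a| * y ≤ M * E := by
    have : |num.im| ≤ ‖num‖ := Complex.abs_im_le_norm num
    rw [hnumim, abs_mul, abs_of_pos hy0] at this
    linarith
  have hdb : |d| ≤ E + |c| * ‖z‖ := by
    have h1 : (d : ℂ) = den - (c : ℂ) * z := by rw [hden]; ring
    have h2 : ‖(d : ℂ)‖ ≤ ‖den‖ + ‖((c:ℂ) * z)‖ := by
      rw [h1]
      simpa using norm_sub_le den ((c : ℂ) * z)
    simp only [Complex.norm_real, norm_mul, Real.norm_eq_abs] at h2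
    linarith
  have hbb : |b| ≤ M * E + |a| * ‖z‖ := by
    have h1 : (b : ℂ) = num - (a : ℂ) * z := by rw [hnum]; ring
    have h2 : ‖(b : ℂ)‖ ≤ ‖num‖ + ‖((a:ℂ) * z)‖ := by
      rw [h1]
      simpa using norm_sub_le num ((a : ℂ) * z)
    simp only [Complex.norm_real, norm_mul, Real.norm_eq_abs] at h2
    linarith
  -- conclude
  clear_value a b c d y z den num E M
  clear hsmul hgim hnum_eq hden0 hg hDle hdenim hnumim hzim hdet habsden habsnum hgz
  set F1 : ℝ := 1 + ‖z‖ + y * Real.exp R with hF1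
  set F2 : ℝ := 1 + y + ‖z‖ with hF2
  have h1F1 : 1 ≤ F1 := by rw [hF1]; nlinarith
  have h1F2 : 1 ≤ F2 := by rw [hF2]; linarith
  have hMF1 : M ≤ F1 := by rw [hM, hF1]; nlinarith
  have hyzF2 : y + ‖z‖ ≤ F2 := by rw [hF2]; linarith
  have hmain : ∀ p q : ℝ, 0 ≤ p → 0 ≤ q → p ≤ F1 → q ≤ F2 → p * E * q ≤ F1 * E * F2 := by
    intro p q hp hq hpF hqF
    have h1 : p * E ≤ F1 * E := mul_le_mul_of_nonneg_right hpF hE0.le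
    exact mul_le_mul h1 hqF hq (by positivity)
  have key : ∀ x : ℝ, |x| * y ≤ F1 * E * F2 → |x| ≤ F1 * E * F2 / y := by
    intro x hx
    rw [le_div_iff₀ hy0]
    exact hx
  have hca : |c| ≤ F1 * E * F2 / y := key c <| by
    have := hmain 1 1 zero_le_one zero_le_one h1F1 h1F2
    linarith
  have haa : |a| ≤ F1 * E * F2 / y := key a <| by
    have := hmain M 1 hM0 zero_le_one hMF1 h1F2
    linarith
  have hda : |d| ≤ F1 * E * F2 / y := key d <| by
    have h3 : |d| * y ≤ E * y + (|c| * y) * ‖z‖ := by nlinarith [abs_nonneg c, mul_le_mul_of_nonneg_right hdb hy0.le]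
    have h4 : (|c| * y) * ‖z‖ ≤ E * ‖z‖ := mul_le_mul_of_nonneg_right hcb habsz
    have h5 := hmain 1 (y + ‖z‖) zero_le_one (by positivity) h1F1 hyzF2
    nlinarith
  have hba : |b| ≤ F1 * E * F2 / y := key b <| by
    have h3 : |b| * y ≤ M * E * y + (|a| * y) * ‖z‖ := by nlinarith [abs_nonneg a, mul_le_mul_of_nonneg_right hbb hy0.le]
    have h4 : (|a| * y) * ‖z‖ ≤ M * E * ‖z‖ := by
      have := mul_le_mul_of_nonneg_right hab habsz
      linarith
    have h5 := hmain M (y + ‖z‖) hM0 (by positivity) hMF1 hyzF2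
    nlinarith
  fin_cases i <;> fin_cases j
  · exact ha ▸ haa
  · exact hb ▸ hba
  · exact hc ▸ hca
  · exact hd ▸ hda

theorem SL2_coe_inducing :
    IsInducing (fun A : Matrix.SpecialLinearGroup (Fin 2) ℝ => (A : Matrix (Fin 2) (Fin 2) ℝ)) :=
  ⟨rfl⟩

theorem SL2_coe_closedEmbedding :
    IsClosedEmbedding
      (fun A : Matrix.SpecialLinearGroup (Fin 2) ℝ => (A : Matrix (Fin 2) (Fin 2) ℝ)) := by
  refine ⟨⟨SL2_coe_inducing, fun g h hgh => Subtype.coe_injective hgh⟩, ?_⟩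
  have : Set.range (fun A : Matrix.SpecialLinearGroup (Fin 2) ℝ =>
      (A : Matrix (Fin 2) (Fin 2) ℝ)) = {A : Matrix (Fin 2) (Fin 2) ℝ | A.det = 1} := by
    ext A
    constructor
    · rintro ⟨g, rfl⟩; exact g.2
    · intro hA; exact ⟨⟨A, hA⟩, rfl⟩
  rw [this]
  exact isClosed_eq (continuous_id.matrix_det) continuous_const

theorem SL2_smul_continuous (z₀ : UpperHalfPlane) :
    Continuous (fun g : Matrix.SpecialLinearGroup (Fin 2) ℝ => g • z₀) := by
  rw [UpperHalfPlane.isEmbedding_coe.isInducing.continuous_iff]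
  have hent : ∀ i j, Continuous fun g : Matrix.SpecialLinearGroup (Fin 2) ℝ =>
      ((g : Matrix (Fin 2) (Fin 2) ℝ) i j : ℂ) := fun i j =>
    Complex.continuous_ofReal.comp
      ((continuous_apply j).comp ((continuous_apply i).comp SL2_coe_inducing.continuous))
  have hden : ∀ g : Matrix.SpecialLinearGroup (Fin 2) ℝ,
      ((g : Matrix (Fin 2) (Fin 2) ℝ) 1 0 : ℂ) * (z₀ : ℂ) + (g : Matrix (Fin 2) (Fin 2) ℝ) 1 1 ≠ 0 :=
    fun g => SL2_denom_ne_zero z₀ g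
  have heq : (((↑) : ℍ → ℂ) ∘ fun g : Matrix.SpecialLinearGroup (Fin 2) ℝ => g • z₀) =
      fun g : Matrix.SpecialLinearGroup (Fin 2) ℝ =>
        (((g : Matrix (Fin 2) (Fin 2) ℝ) 0 0 : ℂ) * (z₀ : ℂ) + (g : Matrix (Fin 2) (Fin 2) ℝ) 0 1) /
          (((g : Matrix (Fin 2) (Fin 2) ℝ) 1 0 : ℂ) * (z₀ : ℂ) + (g : Matrix (Fin 2) (Fin 2) ℝ) 1 1) := by
    funext g
    show ((g • z₀ : ℍ) : ℂ) = _
    rw [UpperHalfPlane.specialLinearGroup_apply]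
    simp [UpperHalfPlane.coe_mk]
  exact ((((hent 0 0).mul continuous_const).add (hent 0 1)).div
    (((hent 1 0).mul continuous_const).add (hent 1 1)) hden).congr
      fun g => (congrFun heq g).symm

/-- The set of isometries of the hyperbolic plane which move a given point `z₀` by a
bounded amount `R` is compact: for `z₀ ∈ ℍ` and `R ≥ 0`, the set
`{g ∈ SL(2,ℝ) : dist(g • z₀, z₀) ≤ R}` is compact, where `dist` is the hyperbolic
distance on the upper half-plane. -/
theorem isCompact_boundedDisplacement (z₀ : UpperHalfPlane) (R : ℝ) (hR : 0 ≤ R) :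
    IsCompact {g : Matrix.SpecialLinearGroup (Fin 2) ℝ | dist (g • z₀) z₀ ≤ R} := by
  set C : ℝ := (1 + ‖(z₀ : ℂ)‖ + z₀.im * Real.exp R) * Real.exp (R / 2) *
      (1 + z₀.im + ‖(z₀ : ℂ)‖) / z₀.im with hC
  set S : Set (Matrix.SpecialLinearGroup (Fin 2) ℝ) := {g | dist (g • z₀) z₀ ≤ R} with hS
  have hSclosed : IsClosed S :=
    isClosed_le ((SL2_smul_continuous z₀).dist continuous_const) continuous_const
  rw [SL2_coe_inducing.isCompact_iff]
  have hK : IsCompact (Set.pi (Set.univ : Set (Fin 2))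
      fun _ => Set.pi (Set.univ : Set (Fin 2)) fun _ => Set.Icc (-C) C) :=
    isCompact_univ_pi fun _ => isCompact_univ_pi fun _ => isCompact_Icc
  refine hK.of_isClosed_subset (SL2_coe_closedEmbedding.isClosedMap _ hSclosed) ?_
  rintro _ ⟨g, hg, rfl⟩
  intro i _
  intro j _
  exact abs_le.1 (SL2_entry_bound z₀ R hR g hg i j)
end
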